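/- arXiv:1812.03059 — 4 statements merged into one kernel-verified Lean document; each statement's English description precedes it below -/
import Mathlib

section
/- Suppose U−L ≥ 4. Then the limit function α(x)=lim_{k→∞} α_k(x), defined for integers x with L ≤ x ≤ U, satisfies: α(U)=0; α(U−1)=q·α(U−2); α(U−2)=pq·α(U−2)+q·α(U−3); for every integer x with L+1 ≤ x ≤ U−3, α(x)=pq·α(x)+p·α(x+2)−pq·α(x+1)+q·α(x−1); and α(L)=1. Moreover α is the unique function on the integers of [L,U] satisfying this system of linear equations. -/
open MeasureTheory ProbabilityTheory Filter
open scoped ENNReal Classical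

noncomputable section

variable {Ω : Type*} [MeasurableSpace Ω]

/-- The `k`-th step of the ladder chain `L(2,2,p)` built from the driving
sequence `ξ` (indexed from 1): `X₁ = ±1` according to `ξ₁`, and for `k ≥ 2`,
`X_k = -1` if `ξ_k = -1`, `X_k = 2` if `ξ_k = ξ_{k-1} = 1`, and `X_k = 1`
if `ξ_k = 1, ξ_{k-1} = -1`. -/
def ladderX (ξ : ℕ → Ω → ℤ) (k : ℕ) (ω : Ω) : ℤ :=
  if k = 1 then (if ξ 1 ω = 1 then 1 else -1)
  else if ξ k ω = -1 then -1
  else if ξ (k - 1) ω = 1 then 2 else 1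

/-- The ladder chain `S_n = X₁ + ⋯ + X_n` (with `S_0 = 0`). -/
def ladderS (ξ : ℕ → Ω → ℤ) (n : ℕ) (ω : Ω) : ℤ :=
  ∑ k ∈ Finset.Icc 1 n, ladderX ξ k ω

/-- The truncated exit time `τ_k^x`: the least `l ≤ k` with `S_l^x ≤ L` or
`S_l^x ≥ U`, and `k` if there is no such `l`. -/
def ladderTau (ξ : ℕ → Ω → ℤ) (L U x : ℤ) (k : ℕ) (ω : Ω) : ℕ :=
  if ∃ l ≤ k, (x + ladderS ξ l ω ≤ L ∨ U ≤ x + ladderS ξ l ω)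
  then sInf {l | l ≤ k ∧ (x + ladderS ξ l ω ≤ L ∨ U ≤ x + ladderS ξ l ω)}
  else k

/-- The event `A_k^x`: the walk started at `x` exits through the lower
barrier `L` within the first `k` steps. -/
def ladderA (ξ : ℕ → Ω → ℤ) (L U x : ℤ) (k : ℕ) : Set Ω :=
  ⋃ l ∈ Finset.range (k + 1),
    {ω | ladderTau ξ L U x k ω = l ∧ x + ladderS ξ l ω ≤ L}

/-- The event `B_k^x`: the walk started at `x` exits through the upper
barrier `U` within the first `k` steps. -/
def ladderB (ξ : ℕ → Ω → ℤ) (L U x : ℤ) (k : ℕ) : Set Ω :=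
  ⋃ l ∈ Finset.range (k + 1),
    {ω | ladderTau ξ L U x k ω = l ∧ U ≤ x + ladderS ξ l ω}

/-- The linear difference system (6) of the paper for the lower-exit
probability `α`. -/
def alphaSystem (p q : ℝ) (L U : ℤ) (f : ℤ → ℝ) : Prop :=
  f U = 0 ∧
  f (U - 1) = q * f (U - 2) ∧
  f (U - 2) = p * q * f (U - 2) + q * f (U - 3) ∧
  (∀ x : ℤ, L + 1 ≤ x → x ≤ U - 3 →
    f x = p * q * f x + p * f (x + 2) - p * q * f (x + 1) + q * f (x - 1)) ∧
  f L = 1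



namespace LadderAux

def sgnB (b : Bool) : ℤ := if b then 1 else -1

def chainX (c : Bool) (s : ℕ → Bool) (j : ℕ) : ℤ :=
  if j = 1 then (if s 0 then (if c then 2 else 1) else -1)
  else if s (j-1) then (if s (j-2) then 2 else 1) else -1

def chainS (c : Bool) (s : ℕ → Bool) (n : ℕ) : ℤ := ∑ j ∈ Finset.Icc 1 n, chainX c s j

def chainT (L U x : ℤ) (k : ℕ) (c : Bool) (s : ℕ → Bool) : ℕ :=
  if ∃ l ≤ k, (x + chainS c s l ≤ L ∨ U ≤ x + chainS c s l)
  then sInf {l | l ≤ k ∧ (x + chainS c s l ≤ L ∨ U ≤ x + chainS c s l)}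
  else k

def chainA (L U x : ℤ) (k : ℕ) (c : Bool) (s : ℕ → Bool) : Prop :=
  x + chainS c s (chainT L U x k c s) ≤ L

lemma chainS_zero (c : Bool) (s : ℕ → Bool) : chainS c s 0 = 0 := by
  simp [chainS]

lemma chainT_le (L U x : ℤ) (k : ℕ) (c : Bool) (s : ℕ → Bool) : chainT L U x k c s ≤ k := by
  unfold chainT
  split_ifs with h
  · obtain ⟨l, hl, hl2⟩ := h
    exact (Nat.sInf_mem (show Set.Nonempty {l | l ≤ k ∧
      (x + chainS c s l ≤ L ∨ U ≤ x + chainS c s l)} from ⟨l, hl, hl2⟩)).1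
  · exact le_rfl

lemma chainT_zero_of_exit (L U x : ℤ) (k : ℕ) (c : Bool) (s : ℕ → Bool)
    (h : x ≤ L ∨ U ≤ x) : chainT L U x k c s = 0 := by
  unfold chainT
  rw [if_pos ⟨0, Nat.zero_le k, by simpa [chainS_zero] using h⟩]
  rw [Nat.sInf_eq_zero]
  exact Or.inl ⟨Nat.zero_le k, by simpa [chainS_zero] using h⟩

lemma chainA_of_le (L U x : ℤ) (k : ℕ) (c : Bool) (s : ℕ → Bool) (h : x ≤ L) :
    chainA L U x k c s := by
  unfold chainA
  rw [chainT_zero_of_exit L U x k c s (Or.inl h)]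
  simpa [chainS_zero] using h

lemma chainA_of_ge (L U x : ℤ) (k : ℕ) (c : Bool) (s : ℕ → Bool) (hLU : L < U) (h : U ≤ x) :
    ¬ chainA L U x k c s := by
  unfold chainA
  rw [chainT_zero_of_exit L U x k c s (Or.inr h)]
  simp only [chainS_zero, add_zero]
  omega

lemma chainX_succ (c : Bool) (s : ℕ → Bool) (j : ℕ) (hj : 1 ≤ j) :
    chainX c s (j+1) = chainX (s 0) (fun n => s (n+1)) j := by
  rcases Nat.lt_or_ge j 2 with h | h
  · interval_cases j
    simp [chainX]
  · have h1 : j + 1 ≠ 1 := by omega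
    have h2 : j ≠ 1 := by omega
    have e1 : j + 1 - 1 = (j - 1) + 1 := by omega
    have e2 : j + 1 - 2 = (j - 2) + 1 := by omega
    simp only [chainX, if_neg h1, if_neg h2, e1, e2]

lemma chainS_succ (c : Bool) (s : ℕ → Bool) (n : ℕ) :
    chainS c s (n+1) = chainX c s 1 + chainS (s 0) (fun m => s (m+1)) n := by
  induction n with
  | zero => simp [chainS]
  | succ n ih =>
      have h1 : chainS c s (n+1+1) = chainS c s (n+1) + chainX c s (n+2) := by
        unfold chainS
        exact Finset.sum_Icc_succ_top (by omega) _
      have h2 : chainS (s 0) (fun m => s (m+1)) (n+1)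
          = chainS (s 0) (fun m => s (m+1)) n + chainX (s 0) (fun m => s (m+1)) (n+1) := by
        unfold chainS
        exact Finset.sum_Icc_succ_top (by omega) _
      rw [h1, ih, h2, chainX_succ c s (n+1) (by omega)]
      ring

lemma chainA_succ (L U x : ℤ) (hL : L < x) (hU : x < U) (k : ℕ) (c : Bool) (s : ℕ → Bool) :
    chainA L U x (k+1) c s ↔
      chainA L U (x + chainX c s 1) k (s 0) (fun m => s (m+1)) := by
  set x' := x + chainX c s 1 with hx'
  set s' := fun m => s (m+1) with hs'
  have pos : ∀ l, x + chainS c s (l+1) = x' + chainS (s 0) s' l := by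
    intro l
    rw [chainS_succ]; ring
  have P0 : ¬ (x + chainS c s 0 ≤ L ∨ U ≤ x + chainS c s 0) := by
    simp only [chainS_zero, add_zero]; omega
  have tau_eq : chainT L U x (k+1) c s = chainT L U x' k (s 0) s' + 1 := by
    unfold chainT
    by_cases h : ∃ l ≤ k, (x' + chainS (s 0) s' l ≤ L ∨ U ≤ x' + chainS (s 0) s' l)
    · obtain ⟨l, hl, hexit⟩ := h
      have h2 : ∃ l ≤ k + 1, (x + chainS c s l ≤ L ∨ U ≤ x + chainS c s l) :=
        ⟨l + 1, by omega, by rw [pos]; exact hexit⟩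
      rw [if_pos h2, if_pos ⟨l, hl, hexit⟩]
      have hmem : sInf {l | l ≤ k ∧ (x' + chainS (s 0) s' l ≤ L ∨ U ≤ x' + chainS (s 0) s' l)}
          ∈ {l | l ≤ k ∧ (x' + chainS (s 0) s' l ≤ L ∨ U ≤ x' + chainS (s 0) s' l)} :=
        Nat.sInf_mem ⟨l, hl, hexit⟩
      set m := sInf {l | l ≤ k ∧ (x' + chainS (s 0) s' l ≤ L ∨ U ≤ x' + chainS (s 0) s' l)}
      have hmk : m ≤ k := hmem.1
      have up : (m + 1) ∈ {l | l ≤ k + 1 ∧ (x + chainS c s l ≤ L ∨ U ≤ x + chainS c s l)} :=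
        ⟨by omega, by rw [pos]; exact hmem.2⟩
      have lower : ∀ j ∈ {l | l ≤ k + 1 ∧ (x + chainS c s l ≤ L ∨ U ≤ x + chainS c s l)},
          m + 1 ≤ j := by
        rintro j ⟨hjk, hje⟩
        rcases Nat.eq_zero_or_pos j with rfl | hj0
        · exact absurd hje P0
        · obtain ⟨j', rfl⟩ := Nat.exists_eq_add_of_lt hj0
          rw [zero_add] at hje ⊢
          have : m ≤ j' := Nat.sInf_le ⟨by omega, by rw [← pos]; exact hje⟩
          omega
      exact le_antisymm (Nat.sInf_le up) (lower _ (Nat.sInf_mem ⟨m+1, up⟩))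
    · rw [if_neg h, if_neg]
      rintro ⟨l, hl, hexit⟩
      rcases Nat.eq_zero_or_pos l with rfl | hl0
      · exact P0 hexit
      · obtain ⟨l', rfl⟩ := Nat.exists_eq_add_of_lt hl0
        rw [zero_add] at hexit hl
        exact h ⟨l', by omega, by rw [← pos]; exact hexit⟩
  unfold chainA
  rw [tau_eq, pos]

lemma chainX_congr {k : ℕ} {s u : ℕ → Bool} (h : ∀ i < k, s i = u i) (c : Bool)
    {j : ℕ} (hj : 1 ≤ j) (hjk : j ≤ k) : chainX c s j = chainX c u j := by
  unfold chainX
  rw [h 0 (by omega), h (j-1) (by omega)]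
  by_cases h2 : 2 ≤ j
  · rw [h (j-2) (by omega)]
  · have : j = 1 := by omega
    simp [this]

lemma chainS_congr {k : ℕ} {s u : ℕ → Bool} (h : ∀ i < k, s i = u i) (c : Bool)
    {l : ℕ} (hl : l ≤ k) : chainS c s l = chainS c u l := by
  unfold chainS
  apply Finset.sum_congr rfl
  intro j hj
  rw [Finset.mem_Icc] at hj
  exact chainX_congr h c hj.1 (by omega)

lemma chainA_congr (L U x : ℤ) (k : ℕ) (c : Bool) {s u : ℕ → Bool} (h : ∀ i < k, s i = u i) :
    chainA L U x k c s ↔ chainA L U x k c u := by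
  have hS : ∀ l ≤ k, chainS c s l = chainS c u l := fun l hl => chainS_congr h c hl
  have hiff : ∀ l, l ≤ k → ((x + chainS c s l ≤ L ∨ U ≤ x + chainS c s l) ↔
      (x + chainS c u l ≤ L ∨ U ≤ x + chainS c u l)) := fun l hl => by rw [hS l hl]
  have hT : chainT L U x k c s = chainT L U x k c u := by
    have hset : {l | l ≤ k ∧ (x + chainS c s l ≤ L ∨ U ≤ x + chainS c s l)}
        = {l | l ≤ k ∧ (x + chainS c u l ≤ L ∨ U ≤ x + chainS c u l)} := by
      ext l; exact and_congr_right fun hl => hiff l hl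
    have hex : (∃ l ≤ k, (x + chainS c s l ≤ L ∨ U ≤ x + chainS c s l)) ↔
        (∃ l ≤ k, (x + chainS c u l ≤ L ∨ U ≤ x + chainS c u l)) := by
      constructor
      · rintro ⟨l, hl, he⟩; exact ⟨l, hl, (hiff l hl).1 he⟩
      · rintro ⟨l, hl, he⟩; exact ⟨l, hl, (hiff l hl).2 he⟩
    unfold chainT
    split_ifs with h1 h2 h2
    · rw [hset]
    · exact absurd (hex.1 h1) h2
    · exact absurd (hex.2 h2) h1
    · rfl
  unfold chainA
  rw [hT, hS _ (hT ▸ chainT_le L U x k c u)]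


def extB (k : ℕ) (t : Fin k → Bool) : ℕ → Bool := fun n => if h : n < k then t ⟨n, h⟩ else false

def wB (p q : ℝ) (b : Bool) : ℝ := if b then p else q

def gam (p q : ℝ) (L U : ℤ) (c : Bool) (k : ℕ) (x : ℤ) : ℝ :=
  ∑ t : Fin k → Bool, (∏ i, wB p q (t i)) *
    (if chainA L U x k c (extB k t) then 1 else 0)

lemma sum_split (k : ℕ) (F : (Fin (k+1) → Bool) → ℝ) :
    ∑ t : Fin (k+1) → Bool, F t = ∑ b : Bool, ∑ u : Fin k → Bool, F (Fin.cons b u) := by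
  rw [← Equiv.sum_comp (Fin.consEquiv (fun _ => Bool)) F]
  rw [Fintype.sum_prod_type]
  rfl

lemma prod_w_cons (p q : ℝ) (k : ℕ) (b : Bool) (u : Fin k → Bool) :
    (∏ i, wB p q ((Fin.cons b u : Fin (k+1) → Bool) i)) = wB p q b * ∏ i, wB p q (u i) := by
  rw [Fin.prod_univ_succ]
  simp

lemma sum_prod_w (p q : ℝ) (hpq : p + q = 1) (k : ℕ) :
    ∑ t : Fin k → Bool, (∏ i, wB p q (t i)) = 1 := by
  induction k with
  | zero => simp
  | succ k ih =>
      rw [sum_split k (fun t => ∏ i, wB p q (t i))]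
      have : ∀ b : Bool, ∑ u : Fin k → Bool, (∏ i, wB p q ((Fin.cons b u : Fin (k+1) → Bool) i))
          = wB p q b := by
        intro b
        simp_rw [prod_w_cons]
        rw [← Finset.mul_sum, ih, mul_one]
      rw [Fintype.sum_bool]
      rw [this true, this false]
      simpa [wB] using hpq

lemma gam_of_le (p q : ℝ) (hpq : p + q = 1) (L U x : ℤ) (c : Bool) (k : ℕ) (h : x ≤ L) :
    gam p q L U c k x = 1 := by
  unfold gam
  have : ∀ t : Fin k → Bool, (if chainA L U x k c (extB k t) then (1:ℝ) else 0) = 1 := by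
    intro t
    rw [if_pos (chainA_of_le L U x k c _ h)]
  simp_rw [this, mul_one]
  exact sum_prod_w p q hpq k

lemma gam_of_ge (p q : ℝ) (L U x : ℤ) (hLU : L < U) (c : Bool) (k : ℕ) (h : U ≤ x) :
    gam p q L U c k x = 0 := by
  unfold gam
  have : ∀ t : Fin k → Bool, (if chainA L U x k c (extB k t) then (1:ℝ) else 0) = 0 := by
    intro t
    rw [if_neg (chainA_of_ge L U x k c _ hLU h)]
  simp_rw [this, mul_zero]
  exact Finset.sum_const_zero

lemma gam_rec (p q : ℝ) (L U x : ℤ) (hL : L < x) (hU : x < U) (c : Bool) (k : ℕ) :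
    gam p q L U c (k+1) x =
      p * gam p q L U true k (x + (if c then 2 else 1)) + q * gam p q L U false k (x - 1) := by
  unfold gam
  rw [sum_split k]
  have key : ∀ (b : Bool) (u : Fin k → Bool),
      chainA L U x (k+1) c (extB (k+1) (Fin.cons b u)) ↔
      chainA L U (x + (if b then (if c then 2 else 1) else -1)) k b (extB k u) := by
    intro b u
    rw [chainA_succ L U x hL hU k c _]
    have h0 : extB (k+1) (Fin.cons b u) 0 = b := by
      simp [extB]
    have hX : chainX c (extB (k+1) (Fin.cons b u)) 1
        = (if b then (if c then 2 else 1) else -1) := by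
      simp [chainX, h0]
    rw [hX, h0]
    apply chainA_congr
    intro i hi
    simp only [extB, dif_pos hi, dif_pos (by omega : i + 1 < k + 1)]
    have : (⟨i+1, by omega⟩ : Fin (k+1)) = Fin.succ ⟨i, hi⟩ := rfl
    rw [this, Fin.cons_succ]
  have hb : ∀ b : Bool,
      (∑ u : Fin k → Bool, (∏ i, wB p q ((Fin.cons b u : Fin (k+1) → Bool) i)) *
        (if chainA L U x (k+1) c (extB (k+1) (Fin.cons b u)) then (1:ℝ) else 0))
      = wB p q b * gam p q L U b k (x + (if b then (if c then 2 else 1) else -1)) := by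
    intro b
    unfold gam
    rw [Finset.mul_sum]
    apply Finset.sum_congr rfl
    intro u _
    rw [prod_w_cons]
    have := key b u
    by_cases hA : chainA L U x (k+1) c (extB (k+1) (Fin.cons b u))
    · rw [if_pos hA, if_pos (this.1 hA)]; ring
    · rw [if_neg hA, if_neg (fun h => hA (this.2 h))]; ring
  rw [Fintype.sum_bool, hb true, hb false]
  simp [wB, gam, sub_eq_add_neg]


set_option linter.unusedSectionVars false


lemma ladderTau_le (ξ : ℕ → Ω → ℤ) (L U x : ℤ) (k : ℕ) (ω : Ω) :
    ladderTau ξ L U x k ω ≤ k := by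
  unfold ladderTau
  split_ifs with h
  · obtain ⟨l, hl, hl2⟩ := h
    exact (Nat.sInf_mem (show Set.Nonempty {l | l ≤ k ∧
      (x + ladderS ξ l ω ≤ L ∨ U ≤ x + ladderS ξ l ω)} from ⟨l, hl, hl2⟩)).1
  · exact le_rfl

lemma mem_ladderA_iff (ξ : ℕ → Ω → ℤ) (L U x : ℤ) (k : ℕ) (ω : Ω) :
    ω ∈ ladderA ξ L U x k ↔ x + ladderS ξ (ladderTau ξ L U x k ω) ω ≤ L := by
  unfold ladderA
  simp only [Set.mem_iUnion, Finset.mem_range, Set.mem_setOf_eq]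
  constructor
  · rintro ⟨l, _, rfl, h2⟩
    exact h2
  · intro h
    exact ⟨ladderTau ξ L U x k ω, by have := ladderTau_le ξ L U x k ω; omega, rfl, h⟩

lemma sgnB_true : sgnB true = 1 := rfl
lemma sgnB_false : sgnB false = -1 := rfl

lemma ladderX_eq_chainX (ξ : ℕ → Ω → ℤ) {k : ℕ} {s : ℕ → Bool} {ω : Ω}
    (h : ∀ i < k, ξ (i+1) ω = sgnB (s i)) {j : ℕ} (hj : 1 ≤ j) (hjk : j ≤ k) :
    ladderX ξ j ω = chainX false s j := by
  rcases Nat.lt_or_ge j 2 with h2 | h2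
  · have hj1 : j = 1 := by omega
    subst hj1
    have h0 := h 0 (by omega)
    cases hs : s 0
    · rw [hs, sgnB_false] at h0
      norm_num [ladderX, chainX, h0, hs]
    · rw [hs, sgnB_true] at h0
      norm_num [ladderX, chainX, h0, hs]
  · have hj1 : j ≠ 1 := by omega
    have hjm : ξ j ω = sgnB (s (j-1)) := by
      have := h (j-1) (by omega)
      rwa [show j - 1 + 1 = j by omega] at this
    have hjm2 : ξ (j-1) ω = sgnB (s (j-2)) := by
      have := h (j-2) (by omega)
      rwa [show j - 2 + 1 = j - 1 by omega] at this
    cases hs : s (j-1) <;> rw [hs] at hjm <;>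
      cases hs2 : s (j-2) <;> rw [hs2] at hjm2 <;>
      simp only [sgnB_true, sgnB_false] at hjm hjm2 <;>
      norm_num [ladderX, chainX, hj1, hjm, hjm2, hs, hs2]

lemma ladderS_eq_chainS (ξ : ℕ → Ω → ℤ) {k : ℕ} {s : ℕ → Bool} {ω : Ω}
    (h : ∀ i < k, ξ (i+1) ω = sgnB (s i)) {l : ℕ} (hl : l ≤ k) :
    ladderS ξ l ω = chainS false s l := by
  unfold ladderS chainS
  apply Finset.sum_congr rfl
  intro j hj
  rw [Finset.mem_Icc] at hj
  exact ladderX_eq_chainX ξ h hj.1 (by omega)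

lemma mem_ladderA_iff_chainA (ξ : ℕ → Ω → ℤ) (L U x : ℤ) (k : ℕ) {s : ℕ → Bool} {ω : Ω}
    (h : ∀ i < k, ξ (i+1) ω = sgnB (s i)) :
    ω ∈ ladderA ξ L U x k ↔ chainA L U x k false s := by
  have hS : ∀ l ≤ k, ladderS ξ l ω = chainS false s l := fun l hl => ladderS_eq_chainS ξ h hl
  have hiff : ∀ l, l ≤ k → ((x + ladderS ξ l ω ≤ L ∨ U ≤ x + ladderS ξ l ω) ↔
      (x + chainS false s l ≤ L ∨ U ≤ x + chainS false s l)) := fun l hl => by rw [hS l hl]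
  have hT : ladderTau ξ L U x k ω = chainT L U x k false s := by
    have hset : {l | l ≤ k ∧ (x + ladderS ξ l ω ≤ L ∨ U ≤ x + ladderS ξ l ω)}
        = {l | l ≤ k ∧ (x + chainS false s l ≤ L ∨ U ≤ x + chainS false s l)} := by
      ext l; exact and_congr_right fun hl => hiff l hl
    have hex : (∃ l ≤ k, (x + ladderS ξ l ω ≤ L ∨ U ≤ x + ladderS ξ l ω)) ↔
        (∃ l ≤ k, (x + chainS false s l ≤ L ∨ U ≤ x + chainS false s l)) := by
      constructor
      · rintro ⟨l, hl, he⟩; exact ⟨l, hl, (hiff l hl).1 he⟩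
      · rintro ⟨l, hl, he⟩; exact ⟨l, hl, (hiff l hl).2 he⟩
    unfold ladderTau chainT
    split_ifs with h1 h2 h2
    · rw [hset]
    · exact absurd (hex.1 h1) h2
    · exact absurd (hex.2 h2) h1
    · rfl
  rw [mem_ladderA_iff]
  rw [hT]
  unfold chainA
  rw [hS _ (by
    have : chainT L U x k false s ≤ k := by
      unfold chainT
      split_ifs with hh
      · obtain ⟨l, hl, hl2⟩ := hh
        exact (Nat.sInf_mem (show Set.Nonempty {l | l ≤ k ∧
          (x + chainS false s l ≤ L ∨ U ≤ x + chainS false s l)} from ⟨l, hl, hl2⟩)).1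
      · exact le_rfl
    exact this)]

lemma measure_ladderA (p q : ℝ) (hp0 : 0 ≤ p) (hq0 : 0 ≤ q) (hpq : p + q = 1)
    (P : Measure Ω) [IsProbabilityMeasure P]
    (ξ : ℕ → Ω → ℤ) (hmeas : ∀ n, Measurable (ξ n))
    (hindep : iIndepFun ξ P)
    (hval : ∀ n ω, ξ n ω = 1 ∨ ξ n ω = -1)
    (hprob : ∀ n, 1 ≤ n → P {ω | ξ n ω = 1} = ENNReal.ofReal p)
    (L U x : ℤ) (k : ℕ) :
    (P (ladderA ξ L U x k)).toReal = gam p q L U false k x := by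
  -- probability of a minus step
  have hprobneg : ∀ n, 1 ≤ n → P {ω | ξ n ω = -1} = ENNReal.ofReal q := by
    intro n hn
    have hcompl : {ω | ξ n ω = -1} = {ω | ξ n ω = 1}ᶜ := by
      ext ω
      simp only [Set.mem_setOf_eq, Set.mem_compl_iff]
      constructor
      · intro h h1
        rw [h1] at h; exact absurd h (by decide)
      · intro h
        rcases hval n ω with h1 | h1
        · exact absurd h1 h
        · exact h1
    have hm1 : MeasurableSet {ω | ξ n ω = 1} := by
      have : {ω | ξ n ω = 1} = ξ n ⁻¹' {1} := by ext ω; simp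
      rw [this]
      exact hmeas n (measurableSet_singleton 1)
    rw [hcompl, measure_compl hm1 (measure_ne_top P _), measure_univ, hprob n hn]
    apply ENNReal.sub_eq_of_eq_add ENNReal.ofReal_ne_top
    rw [← ENNReal.ofReal_add hq0 hp0]
    rw [show q + p = 1 by linarith, ENNReal.ofReal_one]
  -- single preimage probability
  have hsingle : ∀ n, 1 ≤ n → ∀ b : Bool,
      P (ξ n ⁻¹' {sgnB b}) = ENNReal.ofReal (wB p q b) := by
    intro n hn b
    cases b
    · have : ξ n ⁻¹' {sgnB false} = {ω | ξ n ω = -1} := by ext ω; simp [sgnB]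
      rw [this, hprobneg n hn]; rfl
    · have : ξ n ⁻¹' {sgnB true} = {ω | ξ n ω = 1} := by ext ω; simp [sgnB]
      rw [this, hprob n hn]; rfl
  -- atoms
  set Atom : (Fin k → Bool) → Set Ω :=
    fun t => ⋂ i ∈ Finset.Icc 1 k, ξ i ⁻¹' {sgnB (extB k t (i-1))} with hAtomdef
  have hAtomMem : ∀ (t : Fin k → Bool) (ω : Ω),
      ω ∈ Atom t ↔ ∀ i < k, ξ (i+1) ω = sgnB (extB k t i) := by
    intro t ω
    rw [hAtomdef]
    simp only [Set.mem_iInter, Set.mem_preimage, Set.mem_singleton_iff, Finset.mem_Icc]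
    constructor
    · intro H i hi
      have := H (i+1) ⟨by omega, by omega⟩
      simpa using this
    · intro H i hi
      have := H (i-1) (by omega)
      rwa [show i - 1 + 1 = i by omega] at this
  have hAtommeas : ∀ t, MeasurableSet (Atom t) := by
    intro t
    apply Finset.measurableSet_biInter
    intro i _
    exact hmeas i (measurableSet_singleton _)
  have hAtomP : ∀ t : Fin k → Bool,
      P (Atom t) = ∏ i : Fin k, ENNReal.ofReal (wB p q (t i)) := by
    intro t
    rw [hAtomdef]
    rw [hindep.meas_biInter (fun i _ => ⟨{sgnB (extB k t (i-1))}, measurableSet_singleton _, rfl⟩)]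
    have : ∀ i ∈ Finset.Icc 1 k, P (ξ i ⁻¹' {sgnB (extB k t (i-1))})
        = ENNReal.ofReal (wB p q (extB k t (i-1))) := by
      intro i hi
      rw [Finset.mem_Icc] at hi
      exact hsingle i hi.1 _
    rw [Finset.prod_congr rfl this]
    -- reindex
    have hIcc : Finset.Icc 1 k = Finset.map ⟨fun i => i + 1, (show Function.Injective (fun i : ℕ => i + 1) from fun a b hab => by simp only [] at hab; omega)⟩
        (Finset.range k) := by
      ext i
      simp only [Finset.mem_Icc, Finset.mem_map, Finset.mem_range, Function.Embedding.coeFn_mk]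
      constructor
      · rintro ⟨h1, h2⟩; exact ⟨i - 1, by omega, by omega⟩
      · rintro ⟨a, ha, rfl⟩; omega
    rw [hIcc, Finset.prod_map]
    simp only [Function.Embedding.coeFn_mk, Nat.add_sub_cancel]
    rw [← Fin.prod_univ_eq_prod_range (fun i => ENNReal.ofReal (wB p q (extB k t i))) k]
    apply Finset.prod_congr rfl
    intro i _
    congr 1
    simp [extB, i.2]
  -- decomposition of the event
  have hdecomp : ladderA ξ L U x k =
      ⋃ t ∈ Finset.filter (fun t : Fin k → Bool => chainA L U x k false (extB k t))
        Finset.univ, Atom t := by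
    ext ω
    simp only [Set.mem_iUnion, Finset.mem_filter, Finset.mem_univ, true_and, exists_prop]
    constructor
    · intro hω
      refine ⟨fun i => decide (ξ (i.1+1) ω = 1), ?_, ?_⟩
      · have hmatch : ∀ i < k, ξ (i+1) ω = sgnB (extB k (fun i : Fin k =>
            decide (ξ (i.1+1) ω = 1)) i) := by
          intro i hi
          simp only [extB, dif_pos hi]
          rcases hval (i+1) ω with h1 | h1 <;> rw [h1] <;> norm_num [sgnB]
        exact (mem_ladderA_iff_chainA ξ L U x k hmatch).1 hω
      · rw [hAtomMem]
        intro i hi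
        simp only [extB, dif_pos hi]
        rcases hval (i+1) ω with h1 | h1 <;> rw [h1] <;> norm_num [sgnB]
    · rintro ⟨t, hchain, hω⟩
      have hmatch := (hAtomMem t ω).1 hω
      exact (mem_ladderA_iff_chainA ξ L U x k hmatch).2 hchain
  -- disjointness
  have hdisj : (↑(Finset.filter (fun t : Fin k → Bool => chainA L U x k false (extB k t))
      Finset.univ) : Set (Fin k → Bool)).PairwiseDisjoint Atom := by
    intro t _ t' _ hne
    rw [Function.onFun]
    rw [Set.disjoint_left]
    intro ω h1 h2
    apply hne
    funext i
    have e1 := (hAtomMem t ω).1 h1 i i.2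
    have e2 := (hAtomMem t' ω).1 h2 i i.2
    rw [e1] at e2
    simp only [extB, dif_pos i.2] at e2
    have : t ⟨i.1, i.2⟩ = t' ⟨i.1, i.2⟩ := by
      cases hb : t ⟨i.1, i.2⟩ <;> cases hb' : t' ⟨i.1, i.2⟩ <;> rw [hb, hb'] at e2 <;>
        simp [sgnB] at e2 <;> first | rfl | (exfalso; revert e2; decide)
    simpa using this
  -- compute
  rw [hdecomp, measure_biUnion_finset hdisj (fun t _ => hAtommeas t)]
  rw [Finset.sum_congr rfl (fun t _ => hAtomP t)]
  rw [ENNReal.toReal_sum (fun t _ => (ENNReal.prod_lt_top (fun i _ => ENNReal.ofReal_lt_top)).ne)]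
  have hterm : ∀ t : Fin k → Bool,
      (∏ i : Fin k, ENNReal.ofReal (wB p q (t i))).toReal = ∏ i : Fin k, wB p q (t i) := by
    intro t
    rw [ENNReal.toReal_prod]
    apply Finset.prod_congr rfl
    intro i _
    apply ENNReal.toReal_ofReal
    cases t i <;> simp [wB, hp0, hq0]
  rw [Finset.sum_congr rfl (fun t _ => hterm t)]
  rw [Finset.sum_filter]
  unfold gam
  apply Finset.sum_congr rfl
  intro t _
  by_cases hA : chainA L U x k false (extB k t)
  · rw [if_pos hA, if_pos hA, mul_one]
  · rw [if_neg hA, if_neg hA, mul_zero]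


def esq (p q : ℝ) : ℕ → ℝ
  | 0 => 0
  | 1 => q
  | 2 => 1
  | 3 => (1 - p*q)/q
  | (j+4) => ((1 - p*q) * esq p q (j+3) + p*q * esq p q (j+2) - p * esq p q (j+1))/q

lemma esq_succ_lt (p q : ℝ) (hp0 : 0 < p) (hp1 : p < 1) (hq : q = 1 - p) :
    ∀ j, esq p q j < esq p q (j+1) := by
  have hq0 : 0 < q := by rw [hq]; linarith
  intro j
  induction j using Nat.strong_induction_on with
  | _ j ih =>
    match j with
    | 0 => show esq p q 0 < esq p q 1
           rw [show esq p q 0 = 0 from rfl, show esq p q 1 = q from rfl]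
           exact hq0
    | 1 => show esq p q 1 < esq p q 2
           rw [show esq p q 1 = q from rfl, show esq p q 2 = 1 from rfl, hq]
           linarith
    | 2 => show esq p q 2 < esq p q 3
           rw [show esq p q 2 = 1 from rfl, show esq p q 3 = (1 - p*q)/q from rfl,
             lt_div_iff₀ hq0, hq]
           nlinarith [mul_pos hp0 hp0]
    | (j+3) =>
        have h12 : esq p q (j+1) < esq p q (j+2) := ih (j+1) (by omega)
        have h23 : esq p q (j+2) < esq p q (j+3) := ih (j+2) (by omega)
        show esq p q (j+3) < esq p q (j+4)
        rw [show esq p q (j+4)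
            = ((1 - p*q) * esq p q (j+3) + p*q * esq p q (j+2) - p * esq p q (j+1))/q from rfl,
          lt_div_iff₀ hq0]
        have hfac1 : 0 < p * (p * (esq p q (j+3) - esq p q (j+2))) :=
          mul_pos hp0 (mul_pos hp0 (by linarith))
        have hfac2 : 0 < p * (esq p q (j+2) - esq p q (j+1)) :=
          mul_pos hp0 (by linarith)
        have hkey : (1 - p*q)*esq p q (j+3) + p*q*esq p q (j+2) - p*esq p q (j+1)
              - q*esq p q (j+3)
            = p*(p*(esq p q (j+3) - esq p q (j+2))) + p*(esq p q (j+2) - esq p q (j+1)) := by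
          rw [hq]; ring
        linarith [hfac1, hfac2, hkey]

lemma esq_pos (p q : ℝ) (hp0 : 0 < p) (hp1 : p < 1) (hq : q = 1 - p) :
    ∀ j, 0 < esq p q (j+1) := by
  intro j
  induction j with
  | zero => rw [show esq p q 1 = q from rfl, hq]; linarith
  | succ j ih => exact lt_trans ih (esq_succ_lt p q hp0 hp1 hq (j+1))

lemma system_unique (p q : ℝ) (hp0 : 0 < p) (hp1 : p < 1) (hq : q = 1 - p)
    (L U : ℤ) (hLU : U - L ≥ 4) (f g : ℤ → ℝ)
    (hf : alphaSystem p q L U f) (hg : alphaSystem p q L U g) :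
    ∀ x : ℤ, L ≤ x → x ≤ U → f x = g x := by
  obtain ⟨hf1, hf2, hf3, hf4, hf5⟩ := hf
  obtain ⟨hg1, hg2, hg3, hg4, hg5⟩ := hg
  have hq0 : 0 < q := by rw [hq]; linarith
  have hqne : q ≠ 0 := ne_of_gt hq0
  set d : ℤ → ℝ := fun z => f z - g z with hd
  have key : ∀ j : ℕ, (j : ℤ) ≤ U - L → d (U - (j:ℤ)) = esq p q j * d (U - 2) := by
    intro j
    induction j using Nat.strong_induction_on with
    | _ j ih =>
      match j with
      | 0 =>
          intro _
          show d (U - ((0:ℕ):ℤ)) = esq p q 0 * d (U - 2)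
          rw [show esq p q 0 = 0 from rfl]
          simp only [hd, Nat.cast_zero, sub_zero]
          rw [hf1, hg1]
          ring
      | 1 =>
          intro _
          show d (U - ((1:ℕ):ℤ)) = esq p q 1 * d (U - 2)
          rw [show esq p q 1 = q from rfl]
          simp only [hd, Nat.cast_one]
          rw [hf2, hg2]
          ring
      | 2 =>
          intro _
          show d (U - ((2:ℕ):ℤ)) = esq p q 2 * d (U - 2)
          rw [show esq p q 2 = 1 from rfl]
          simp only [hd, Nat.cast_ofNat]
          ring
      | 3 =>
          intro _
          show d (U - ((3:ℕ):ℤ)) = esq p q 3 * d (U - 2)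
          rw [show esq p q 3 = (1 - p*q)/q from rfl]
          have e3 : U - ((3:ℕ):ℤ) = U - 3 := by push_cast; ring
          rw [e3]
          simp only [hd]
          rw [div_mul_eq_mul_div, eq_div_iff hqne]
          linear_combination (-1 : ℝ) * hf3 + hg3
      | (j+4) =>
          intro hjle
          have hcast : ((j+4 : ℕ) : ℤ) = (j:ℤ) + 4 := by push_cast; ring
          rw [hcast] at hjle ⊢
          have h3 : d (U - ((j:ℤ)+3)) = esq p q (j+3) * d (U - 2) := by
            have := ih (j+3) (by omega) (by push_cast; omega)
            rwa [show ((j+3:ℕ):ℤ) = (j:ℤ)+3 by push_cast; ring] at this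
          have h2 : d (U - ((j:ℤ)+2)) = esq p q (j+2) * d (U - 2) := by
            have := ih (j+2) (by omega) (by push_cast; omega)
            rwa [show ((j+2:ℕ):ℤ) = (j:ℤ)+2 by push_cast; ring] at this
          have h1 : d (U - ((j:ℤ)+1)) = esq p q (j+1) * d (U - 2) := by
            have := ih (j+1) (by omega) (by push_cast; omega)
            rwa [show ((j+1:ℕ):ℤ) = (j:ℤ)+1 by push_cast; ring] at this
          set x : ℤ := U - ((j:ℤ)+3) with hx
          have hxL : L + 1 ≤ x := by omega
          have hxU : x ≤ U - 3 := by omega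
          have hfx := hf4 x hxL hxU
          have hgx := hg4 x hxL hxU
          have hdx : d x = p * q * d x + p * d (x+2) - p * q * d (x+1) + q * d (x-1) := by
            simp only [hd]
            linarith [hfx, hgx]
          have ex2 : x + 2 = U - ((j:ℤ)+1) := by omega
          have ex1 : x + 1 = U - ((j:ℤ)+2) := by omega
          have ex0 : x - 1 = U - ((j:ℤ)+4) := by omega
          rw [ex2, ex1, ex0] at hdx
          rw [show esq p q (j+4)
            = ((1 - p*q) * esq p q (j+3) + p*q * esq p q (j+2) - p * esq p q (j+1))/q from rfl]
          rw [div_mul_eq_mul_div, eq_div_iff hqne]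
          linear_combination (-1 : ℝ) * hdx + (1 - p*q) * h3 + p*q * h2 + (-p) * h1
  -- conclude
  have htop : d L = 0 := by simp only [hd]; rw [hf5, hg5]; ring
  set jstar := (U - L).toNat with hjstar
  have hjcast : ((jstar:ℕ):ℤ) = U - L := Int.toNat_of_nonneg (by omega)
  have hdl : d (U - ((jstar:ℕ):ℤ)) = esq p q jstar * d (U - 2) := key jstar (by omega)
  rw [hjcast, show U - (U - L) = L by ring] at hdl
  have hjpos : 1 ≤ jstar := by omega
  obtain ⟨m, hm⟩ : ∃ m, jstar = m + 1 := ⟨jstar - 1, by omega⟩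
  have hepos : 0 < esq p q jstar := by rw [hm]; exact esq_pos p q hp0 hp1 hq m
  have ht0 : d (U - 2) = 0 := by
    have h0 : esq p q jstar * d (U - 2) = 0 := by rw [← hdl, htop]
    rcases mul_eq_zero.1 h0 with h | h
    · exact absurd h (ne_of_gt hepos)
    · exact h
  intro x hx1 hx2
  set j := (U - x).toNat with hj
  have hjc : ((j:ℕ):ℤ) = U - x := Int.toNat_of_nonneg (by omega)
  have := key j (by omega)
  rw [hjc, show U - (U - x) = x by ring, ht0, mul_zero] at this
  simp only [hd] at this
  linarith [this]


end LadderAux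

/-- The limit `α(x) = lim_k α_k(x)` satisfies the linear
difference system (6), and is the unique solution of that system on the
integers of `[L, U]`. -/
theorem ladder_alpha_system_unique (p q : ℝ) (hp0 : 0 < p) (hp1 : p < 1) (hq : q = 1 - p)
    (P : Measure Ω) [IsProbabilityMeasure P]
    (ξ : ℕ → Ω → ℤ) (hmeas : ∀ n, Measurable (ξ n))
    (hindep : iIndepFun ξ P)
    (hval : ∀ n ω, ξ n ω = 1 ∨ ξ n ω = -1)
    (hprob : ∀ n, 1 ≤ n → P {ω | ξ n ω = 1} = ENNReal.ofReal p)
    (L U : ℤ) (hLU : U - L ≥ 4)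
    (a : ℤ → ℝ)
    (ha : ∀ x : ℤ, L ≤ x → x ≤ U →
      Tendsto (fun k => (P (ladderA ξ L U x k)).toReal) atTop (nhds (a x))) :
    alphaSystem p q L U a ∧
    ∀ b : ℤ → ℝ, alphaSystem p q L U b →
      ∀ x : ℤ, L ≤ x → x ≤ U → b x = a x := by
  have hq0 : 0 < q := by rw [hq]; linarith
  have hpq : p + q = 1 := by rw [hq]; ring
  have hLU' : L < U := by omega
  have hgamA : ∀ (x : ℤ) (k : ℕ),
      (P (ladderA ξ L U x k)).toReal = LadderAux.gam p q L U false k x :=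
    fun x k => LadderAux.measure_ladderA p q hp0.le hq0.le hpq P ξ hmeas hindep hval hprob L U x k
  have halim : ∀ x : ℤ, L ≤ x → x ≤ U →
      Tendsto (fun k => LadderAux.gam p q L U false k x) atTop (nhds (a x)) := by
    intro x h1 h2
    have h := ha x h1 h2
    have heq : (fun k => (P (ladderA ξ L U x k)).toReal)
        = fun k => LadderAux.gam p q L U false k x := funext fun k => hgamA x k
    rwa [heq] at h
  have hshift : ∀ (m : ℕ) (x : ℤ), L ≤ x → x ≤ U →
      Tendsto (fun k => LadderAux.gam p q L U false (k + m) x) atTop (nhds (a x)) :=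
    fun m x h1 h2 => (halim x h1 h2).comp (tendsto_add_atTop_nat m)
  have grecF : ∀ (y : ℤ), L < y → y < U → ∀ k : ℕ,
      LadderAux.gam p q L U false (k+1) y
        = p * LadderAux.gam p q L U true k (y+1) + q * LadderAux.gam p q L U false k (y-1) := by
    intro y h1 h2 k
    have h := LadderAux.gam_rec p q L U y h1 h2 false k
    simpa using h
  have grecT : ∀ (y : ℤ), L < y → y < U → ∀ k : ℕ,
      LadderAux.gam p q L U true (k+1) y
        = p * LadderAux.gam p q L U true k (y+2) + q * LadderAux.gam p q L U false k (y-1) := by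
    intro y h1 h2 k
    have h := LadderAux.gam_rec p q L U y h1 h2 true k
    simpa using h
  have gamTop : ∀ (c : Bool) (k : ℕ) (y : ℤ), U ≤ y → LadderAux.gam p q L U c k y = 0 :=
    fun c k y hy => LadderAux.gam_of_ge p q L U y hLU' c k hy
  have haU : a U = 0 := by
    have h1 := halim U (by omega) le_rfl
    have h2 : (fun k => LadderAux.gam p q L U false k U) = fun _ => (0:ℝ) :=
      funext fun k => gamTop false k U le_rfl
    rw [h2] at h1
    exact tendsto_nhds_unique h1 tendsto_const_nhds
  have haL : a L = 1 := by
    have h1 := halim L le_rfl (by omega)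
    have h2 : (fun k => LadderAux.gam p q L U false k L) = fun _ => (1:ℝ) :=
      funext fun k => LadderAux.gam_of_le p q hpq L U L false k le_rfl
    rw [h2] at h1
    exact tendsto_nhds_unique h1 tendsto_const_nhds
  have haU1 : a (U-1) = q * a (U-2) := by
    have hfun : (fun k => LadderAux.gam p q L U false (k+1) (U-1))
        = fun k => q * LadderAux.gam p q L U false k (U-2) := by
      funext k
      rw [grecF (U-1) (by omega) (by omega) k]
      rw [show U - 1 + 1 = U by ring, gamTop true k U le_rfl, mul_zero, zero_add]
      rw [show U - 1 - 1 = U - 2 by ring]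
    have h1 := hshift 1 (U-1) (by omega) (by omega)
    rw [hfun] at h1
    have h2 : Tendsto (fun k => q * LadderAux.gam p q L U false k (U-2)) atTop
        (nhds (q * a (U-2))) := (halim (U-2) (by omega) (by omega)).const_mul q
    exact tendsto_nhds_unique h1 h2
  have haU2 : a (U-2) = p * q * a (U-2) + q * a (U-3) := by
    have hfun : (fun k => LadderAux.gam p q L U false (k+2) (U-2))
        = fun k => p * (q * LadderAux.gam p q L U false k (U-2))
            + q * LadderAux.gam p q L U false (k+1) (U-3) := by
      funext k
      rw [show k + 2 = (k+1) + 1 by omega, grecF (U-2) (by omega) (by omega) (k+1)]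
      rw [show U - 2 + 1 = U - 1 by ring, show U - 2 - 1 = U - 3 by ring]
      rw [grecT (U-1) (by omega) (by omega) k]
      rw [show U - 1 + 2 = U + 1 by ring, gamTop true k (U+1) (by omega), mul_zero, zero_add]
      rw [show U - 1 - 1 = U - 2 by ring]
    have h1 := hshift 2 (U-2) (by omega) (by omega)
    rw [hfun] at h1
    have h2 : Tendsto (fun k => p * (q * LadderAux.gam p q L U false k (U-2))
        + q * LadderAux.gam p q L U false (k+1) (U-3)) atTop
        (nhds (p * (q * a (U-2)) + q * a (U-3))) :=
      (((halim (U-2) (by omega) (by omega)).const_mul q).const_mul p).add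
        ((hshift 1 (U-3) (by omega) (by omega)).const_mul q)
    have h3 := tendsto_nhds_unique h1 h2
    linear_combination h3
  have haInt : ∀ x : ℤ, L + 1 ≤ x → x ≤ U - 3 →
      a x = p * q * a x + p * a (x+2) - p * q * a (x+1) + q * a (x-1) := by
    intro x hx1 hx2
    have hfun : (fun k => LadderAux.gam p q L U false (k+2) x)
        = fun k => p * LadderAux.gam p q L U false (k+1) (x+2)
            - p * q * LadderAux.gam p q L U false k (x+1)
            + p * q * LadderAux.gam p q L U false k x
            + q * LadderAux.gam p q L U false (k+1) (x-1) := by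
      funext k
      have e1 : LadderAux.gam p q L U false (k+2) x
          = p * LadderAux.gam p q L U true (k+1) (x+1)
            + q * LadderAux.gam p q L U false (k+1) (x-1) := by
        have h := grecF x (by omega) (by omega) (k+1)
        rwa [show (k+1)+1 = k+2 by omega] at h
      have e2 := grecT (x+1) (by omega) (by omega) k
      have e3 := grecF (x+2) (by omega) (by omega) k
      rw [show x + 1 + 2 = x + 3 by ring, show x + 1 - 1 = x by ring] at e2
      rw [show x + 2 + 1 = x + 3 by ring, show x + 2 - 1 = x + 1 by ring] at e3
      rw [e1, e2, e3]
      ring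
    have h1 := hshift 2 x (by omega) (by omega)
    rw [hfun] at h1
    have h2 : Tendsto (fun k => p * LadderAux.gam p q L U false (k+1) (x+2)
            - p * q * LadderAux.gam p q L U false k (x+1)
            + p * q * LadderAux.gam p q L U false k x
            + q * LadderAux.gam p q L U false (k+1) (x-1)) atTop
        (nhds (p * a (x+2) - p * q * a (x+1) + p * q * a x + q * a (x-1))) :=
      ((((hshift 1 (x+2) (by omega) (by omega)).const_mul p).sub
        ((halim (x+1) (by omega) (by omega)).const_mul (p*q))).add
        ((halim x (by omega) (by omega)).const_mul (p*q))).add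
        ((hshift 1 (x-1) (by omega) (by omega)).const_mul q)
    have h3 := tendsto_nhds_unique h1 h2
    linarith [h3]
  have part1 : alphaSystem p q L U a := ⟨haU, haU1, haU2, haInt, haL⟩
  refine ⟨part1, ?_⟩
  intro b hb x h1 h2
  exact LadderAux.system_unique p q hp0 hp1 hq L U hLU b a hb part1 x h1 h2

end
end

section
/- Suppose U−L ≥ 4. Then the limit function β(x)=lim_{k→∞} β_k(x), defined for integers x with L ≤ x ≤ U, satisfies: β(U)=1; β(U−1)=p+q·β(U−2); β(U−2)=p²+pq·β(U−2)+q·β(U−3); for every integer x with L+1 ≤ x ≤ U−3, β(x)=pq·β(x)+p·β(x+2)−pq·β(x+1)+q·β(x−1); and β(L)=0. Moreover β is the unique function on the integers of [L,U] satisfying this system of linear equations. -/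
open MeasureTheory ProbabilityTheory Filter
open scoped ENNReal Classical

noncomputable section

variable {Ω : Type*} [MeasurableSpace Ω]

/-- The linear difference system (7) of the paper for the upper-exit
probability `β`. -/
def betaSystem (p q : ℝ) (L U : ℤ) (f : ℤ → ℝ) : Prop :=
  f U = 1 ∧
  f (U - 1) = p + q * f (U - 2) ∧
  f (U - 2) = p ^ 2 + p * q * f (U - 2) + q * f (U - 3) ∧
  (∀ x : ℤ, L + 1 ≤ x → x ≤ U - 3 →
    f x = p * q * f x + p * f (x + 2) - p * q * f (x + 1) + q * f (x - 1)) ∧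
  f L = 0

namespace LadderAux


/-- deterministic step function -/
def dX (z : ℕ → ℤ) (k : ℕ) : ℤ :=
  if k = 1 then (if z 1 = 1 then 1 else -1)
  else if z k = -1 then -1
  else if z (k - 1) = 1 then 2 else 1

/-- primed step function -/
def dX' (z : ℕ → ℤ) (k : ℕ) : ℤ :=
  if k = 1 then (if z 1 = 1 then 2 else -1)
  else if z k = -1 then -1
  else if z (k - 1) = 1 then 2 else 1

def dS (z : ℕ → ℤ) (n : ℕ) : ℤ := ∑ k ∈ Finset.Icc 1 n, dX z k
def dS' (z : ℕ → ℤ) (n : ℕ) : ℤ := ∑ k ∈ Finset.Icc 1 n, dX' z k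

lemma dS_zero (z : ℕ → ℤ) : dS z 0 = 0 := by simp [dS]
lemma dS'_zero (z : ℕ → ℤ) : dS' z 0 = 0 := by simp [dS']
lemma dS_succ (z : ℕ → ℤ) (n : ℕ) : dS z (n+1) = dS z n + dX z (n+1) :=
  Finset.sum_Icc_succ_top (Nat.one_le_iff_ne_zero.2 (Nat.succ_ne_zero n)) _
lemma dS'_succ (z : ℕ → ℤ) (n : ℕ) : dS' z (n+1) = dS' z n + dX' z (n+1) :=
  Finset.sum_Icc_succ_top (Nat.one_le_iff_ne_zero.2 (Nat.succ_ne_zero n)) _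

lemma dX_congr {z z' : ℕ → ℤ} {k : ℕ} (j : ℕ) (hj1 : 1 ≤ j) (hjk : j ≤ k)
    (h : ∀ n, 1 ≤ n → n ≤ k → z n = z' n) : dX z j = dX z' j := by
  unfold dX
  rcases eq_or_ne j 1 with rfl | hj
  · simp [h 1 le_rfl hjk]
  · have h2 : 2 ≤ j := by omega
    rw [if_neg hj, if_neg hj, h j hj1 hjk, h (j-1) (by omega) (by omega)]

lemma dX'_congr {z z' : ℕ → ℤ} {k : ℕ} (j : ℕ) (hj1 : 1 ≤ j) (hjk : j ≤ k)
    (h : ∀ n, 1 ≤ n → n ≤ k → z n = z' n) : dX' z j = dX' z' j := by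
  unfold dX'
  rcases eq_or_ne j 1 with rfl | hj
  · simp [h 1 le_rfl hjk]
  · rw [if_neg hj, if_neg hj, h j hj1 hjk, h (j-1) (by omega) (by omega)]

lemma dS_congr {z z' : ℕ → ℤ} {k : ℕ} (h : ∀ n, 1 ≤ n → n ≤ k → z n = z' n)
    {l : ℕ} (hl : l ≤ k) : dS z l = dS z' l := by
  unfold dS
  refine Finset.sum_congr rfl fun j hj => ?_
  simp only [Finset.mem_Icc] at hj
  exact dX_congr j hj.1 (le_trans hj.2 hl) h

lemma dS'_congr {z z' : ℕ → ℤ} {k : ℕ} (h : ∀ n, 1 ≤ n → n ≤ k → z n = z' n)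
    {l : ℕ} (hl : l ≤ k) : dS' z l = dS' z' l := by
  unfold dS'
  refine Finset.sum_congr rfl fun j hj => ?_
  simp only [Finset.mem_Icc] at hj
  exact dX'_congr j hj.1 (le_trans hj.2 hl) h

/-- for `k ≥ 2` all four step functions agree under shift -/
lemma dX_shift (z : ℕ → ℤ) (k : ℕ) (hk : 2 ≤ k) :
    dX z (k+1) = dX (fun n => z (n+1)) k ∧ dX' z (k+1) = dX (fun n => z (n+1)) k := by
  have h1 : k + 1 ≠ 1 := by omega
  have h2 : k ≠ 1 := by omega
  have h3 : k + 1 - 1 = (k - 1) + 1 := by omega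
  constructor <;> · simp only [dX, dX']; rw [if_neg h1, if_neg h2]; rw [h3]

lemma dX_two_neg (z : ℕ → ℤ) (hz1 : z 1 = -1) (hv : z 2 = 1 ∨ z 2 = -1) :
    dX z 2 = dX (fun n => z (n+1)) 1 ∧ dX' z 2 = dX (fun n => z (n+1)) 1 := by
  have : ¬ ((1:ℤ) = -1) := by norm_num
  constructor <;> · simp only [dX, dX']
                    rcases hv with h2 | h2 <;> simp [h2, hz1] <;> norm_num

lemma dX_two_pos (z : ℕ → ℤ) (hz1 : z 1 = 1) (hv : z 2 = 1 ∨ z 2 = -1) :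
    dX z 2 = dX' (fun n => z (n+1)) 1 ∧ dX' z 2 = dX' (fun n => z (n+1)) 1 := by
  constructor <;> · simp only [dX, dX']
                    rcases hv with h2 | h2 <;> simp [h2, hz1] <;> norm_num

/-- shift lemmas -/
lemma dS_shift_neg {z : ℕ → ℤ} (hz1 : z 1 = -1) (hv : ∀ n, z n = 1 ∨ z n = -1) (l : ℕ) :
    dS z (l+1) = -1 + dS (fun n => z (n+1)) l := by
  induction l with
  | zero => simp [dS_zero, dS_succ, dS, dX, hz1]
  | succ l ih =>
      rw [dS_succ, ih, dS_succ]
      rcases Nat.eq_zero_or_pos l with rfl | h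
      ·
        rw [(dX_two_neg z hz1 (hv 2)).1]; ring
      · rw [(dX_shift z (l+1) (by omega)).1]; ring

lemma dS'_shift_neg {z : ℕ → ℤ} (hz1 : z 1 = -1) (hv : ∀ n, z n = 1 ∨ z n = -1) (l : ℕ) :
    dS' z (l+1) = -1 + dS (fun n => z (n+1)) l := by
  induction l with
  | zero => simp [dS_zero, dS'_succ, dS', dX', hz1]
  | succ l ih =>
      rw [dS'_succ, ih, dS_succ]
      rcases Nat.eq_zero_or_pos l with rfl | h
      ·
        rw [(dX_two_neg z hz1 (hv 2)).2]; ring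
      · rw [(dX_shift z (l+1) (by omega)).2]; ring

lemma dS_shift_pos {z : ℕ → ℤ} (hz1 : z 1 = 1) (hv : ∀ n, z n = 1 ∨ z n = -1) (l : ℕ) :
    dS z (l+1) = 1 + dS' (fun n => z (n+1)) l := by
  induction l with
  | zero => simp [dS'_zero, dS_succ, dS, dX, hz1]
  | succ l ih =>
      rw [dS_succ, ih, dS'_succ]
      rcases Nat.eq_zero_or_pos l with rfl | h
      ·
        rw [(dX_two_pos z hz1 (hv 2)).1]
        ring
      · have h5 := (dX_shift z (l+1) (by omega)).1
        have h6 : dX (fun n => z (n+1)) (l+1) = dX' (fun n => z (n+1)) (l+1) := by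
          simp only [dX, dX']; rw [if_neg (by omega : l+1 ≠ 1), if_neg (by omega : l+1 ≠ 1)]
        rw [h5, h6]; ring

lemma dS'_shift_pos {z : ℕ → ℤ} (hz1 : z 1 = 1) (hv : ∀ n, z n = 1 ∨ z n = -1) (l : ℕ) :
    dS' z (l+1) = 2 + dS' (fun n => z (n+1)) l := by
  induction l with
  | zero => simp [dS'_zero, dS'_succ, dS', dX', hz1]
  | succ l ih =>
      rw [dS'_succ, ih, dS'_succ]
      rcases Nat.eq_zero_or_pos l with rfl | h
      ·
        rw [(dX_two_pos z hz1 (hv 2)).2]; ring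
      · have h5 := (dX_shift z (l+1) (by omega)).2
        have h6 : dX (fun n => z (n+1)) (l+1) = dX' (fun n => z (n+1)) (l+1) := by
          simp only [dX, dX']; rw [if_neg (by omega : l+1 ≠ 1), if_neg (by omega : l+1 ≠ 1)]
        rw [h5, h6]; ring

/-- the upper-exit predicate for a walk `W` (absolute positions) within `k` steps -/
def upExit (L U : ℤ) (W : ℕ → ℤ) (k : ℕ) : Prop :=
  ∃ t ≤ k, (∀ m < t, L < W m ∧ W m < U) ∧ U ≤ W t

lemma upExit_mono {L U : ℤ} {W : ℕ → ℤ} {k k' : ℕ} (h : k ≤ k') :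
    upExit L U W k → upExit L U W k' := by
  rintro ⟨t, ht, h1, h2⟩; exact ⟨t, le_trans ht h, h1, h2⟩

lemma upExit_congr {L U : ℤ} {W W' : ℕ → ℤ} {k : ℕ} (h : ∀ l ≤ k, W l = W' l) :
    upExit L U W k ↔ upExit L U W' k := by
  constructor <;> rintro ⟨t, ht, h1, h2⟩
  · exact ⟨t, ht, fun m hm => by rw [← h m (le_trans hm.le ht)]; exact h1 m hm,
      by rw [← h t ht]; exact h2⟩
  · exact ⟨t, ht, fun m hm => by rw [h m (le_trans hm.le ht)]; exact h1 m hm,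
      by rw [h t ht]; exact h2⟩

lemma upExit_top {L U : ℤ} {W : ℕ → ℤ} {k : ℕ} (h : U ≤ W 0) : upExit L U W k :=
  ⟨0, Nat.zero_le k, fun m hm => absurd hm (Nat.not_lt_zero m), h⟩

lemma upExit_bot {L U : ℤ} {W : ℕ → ℤ} {k : ℕ} (hLU : L < U) (h : W 0 ≤ L) :
    ¬ upExit L U W k := by
  rintro ⟨t, ht, h1, h2⟩
  rcases Nat.eq_zero_or_pos t with rfl | hpos
  · omega
  · exact absurd (h1 0 hpos).1 (by omega)

lemma upExit_succ {L U : ℤ} {W : ℕ → ℤ} (h0 : L < W 0 ∧ W 0 < U) (k : ℕ) :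
    upExit L U W (k+1) ↔ upExit L U (fun l => W (l+1)) k := by
  constructor
  · rintro ⟨t, ht, h1, h2⟩
    rcases Nat.eq_zero_or_pos t with rfl | hpos
    · omega
    · obtain ⟨t', rfl⟩ : ∃ t', t = t' + 1 := ⟨t - 1, by omega⟩
      exact ⟨t', by omega, fun m hm => h1 (m+1) (by omega), h2⟩
  · rintro ⟨t, ht, h1, h2⟩
    refine ⟨t+1, by omega, fun m hm => ?_, h2⟩
    rcases Nat.eq_zero_or_pos m with rfl | hpos
    · exact h0
    · obtain ⟨m', rfl⟩ : ∃ m', m = m' + 1 := ⟨m - 1, by omega⟩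
      exact h1 m' (by omega)


/-- the sign pattern determined by a boolean vector, as an integer sequence -/
def bval {k : ℕ} (s : Fin k → Bool) : ℕ → ℤ :=
  fun n => if h : 1 ≤ n ∧ n ≤ k then (if s ⟨n - 1, by omega⟩ then 1 else -1) else 1

lemma bval_val {k : ℕ} (s : Fin k → Bool) (n : ℕ) : bval s n = 1 ∨ bval s n = -1 := by
  unfold bval
  split
  · split <;> simp
  · left; rfl

lemma bval_one {k : ℕ} (s : Fin (k+1) → Bool) : bval s 1 = (if s 0 then 1 else -1) := by
  unfold bval
  rw [dif_pos ⟨le_rfl, by omega⟩]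
  have : (⟨1 - 1, by omega⟩ : Fin (k+1)) = 0 := by apply Fin.ext; simp
  rw [this]

lemma bval_cons_shift {k : ℕ} (b : Bool) (t : Fin k → Bool) :
    ∀ n, 1 ≤ n → n ≤ k → bval (Fin.cons b t) (n+1) = bval t n := by
  intro n h1 h2
  unfold bval
  rw [dif_pos ⟨by omega, by omega⟩, dif_pos ⟨h1, h2⟩]
  have : (⟨n + 1 - 1, by omega⟩ : Fin (k+1)) = Fin.succ ⟨n - 1, by omega⟩ := by
    apply Fin.ext; simp; omega
  rw [this, Fin.cons_succ]

/-- the weight of a boolean vector -/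
def wgt (p q : ℝ) {k : ℕ} (s : Fin k → Bool) : ℝ := ∏ i, (if s i then p else q)

lemma wgt_nonneg {p q : ℝ} (hp : 0 ≤ p) (hq : 0 ≤ q) {k : ℕ} (s : Fin k → Bool) :
    0 ≤ wgt p q s :=
  Finset.prod_nonneg fun i _ => by split <;> assumption

lemma wgt_cons (p q : ℝ) {k : ℕ} (b : Bool) (t : Fin k → Bool) :
    wgt p q (Fin.cons b t) = (if b then p else q) * wgt p q t := by
  unfold wgt
  rw [Fin.prod_univ_succ]
  simp [Fin.cons_succ, Fin.cons_zero]

lemma sum_cons_split {k : ℕ} (F : (Fin (k+1) → Bool) → ℝ) :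
    ∑ s : Fin (k+1) → Bool, F s
      = (∑ t : Fin k → Bool, F (Fin.cons true t)) + ∑ t : Fin k → Bool, F (Fin.cons false t) := by
  rw [← Equiv.sum_comp (Fin.consEquiv (fun _ => Bool)) F, Fintype.sum_prod_type,
    Fintype.sum_bool]
  rfl

lemma wgt_sum (p q : ℝ) (k : ℕ) : ∑ s : Fin k → Bool, wgt p q s = (p + q) ^ k := by
  induction k with
  | zero => simp [wgt]
  | succ k ih =>
      rw [sum_cons_split (wgt p q)]
      simp only [wgt_cons]
      simp only [if_true, if_false, Bool.false_eq_true, ← Finset.mul_sum, ih]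
      ring

/-- deterministic finite-horizon exit-up probability, plain walk -/
def betaD (p q : ℝ) (L U x : ℤ) (k : ℕ) : ℝ :=
  ∑ s : Fin k → Bool, if upExit L U (fun l => x + dS (bval s) l) k then wgt p q s else 0

/-- deterministic finite-horizon exit-up probability, primed walk -/
def gamD (p q : ℝ) (L U y : ℤ) (k : ℕ) : ℝ :=
  ∑ s : Fin k → Bool, if upExit L U (fun l => y + dS' (bval s) l) k then wgt p q s else 0

lemma betaD_top (p q : ℝ) (L U x : ℤ) (k : ℕ) (h : U ≤ x) :
    betaD p q L U x k = (p + q) ^ k := by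
  rw [← wgt_sum p q k]
  refine Finset.sum_congr rfl fun s _ => ?_
  rw [if_pos (upExit_top (by simpa [dS_zero] using h))]

lemma gamD_top (p q : ℝ) (L U y : ℤ) (k : ℕ) (h : U ≤ y) :
    gamD p q L U y k = (p + q) ^ k := by
  rw [← wgt_sum p q k]
  refine Finset.sum_congr rfl fun s _ => ?_
  rw [if_pos (upExit_top (by simpa [dS'_zero] using h))]

lemma betaD_bot (p q : ℝ) (L U x : ℤ) (k : ℕ) (hLU : L < U) (h : x ≤ L) :
    betaD p q L U x k = 0 := by
  refine Finset.sum_eq_zero fun s _ => ?_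
  rw [if_neg (upExit_bot hLU (by simpa [dS_zero] using h))]

/-- key step-splitting: the exit predicate for `cons b t` -/
lemma upExit_cons_plain (L U x : ℤ) (hL : L < x) (hU : x < U) (k : ℕ)
    (b : Bool) (t : Fin k → Bool) :
    upExit L U (fun l => x + dS (bval (Fin.cons b t)) l) (k+1) ↔
      (if b then upExit L U (fun l => (x+1) + dS' (bval t) l) k
       else upExit L U (fun l => (x-1) + dS (bval t) l) k) := by
  set z := bval (Fin.cons b t) with hz
  have hzv : ∀ n, z n = 1 ∨ z n = -1 := bval_val _
  have hz1 : z 1 = (if b then 1 else -1) := by rw [hz, bval_one, Fin.cons_zero]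
  have h0 : L < x + dS z 0 ∧ x + dS z 0 < U := by rw [dS_zero]; omega
  rw [upExit_succ h0 k]
  cases b
  · simp only [Bool.false_eq_true, if_false] at hz1 ⊢
    refine upExit_congr fun l hl => ?_
    rw [dS_shift_neg hz1 hzv l,
      dS_congr (z := fun n => z (n+1)) (z' := bval t) (bval_cons_shift false t) hl]
    ring
  · simp only [if_true] at hz1 ⊢
    refine upExit_congr fun l hl => ?_
    rw [dS_shift_pos hz1 hzv l,
      dS'_congr (z := fun n => z (n+1)) (z' := bval t) (bval_cons_shift true t) hl]
    ring

lemma upExit_cons_primed (L U y : ℤ) (hL : L < y) (hU : y < U) (k : ℕ)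
    (b : Bool) (t : Fin k → Bool) :
    upExit L U (fun l => y + dS' (bval (Fin.cons b t)) l) (k+1) ↔
      (if b then upExit L U (fun l => (y+2) + dS' (bval t) l) k
       else upExit L U (fun l => (y-1) + dS (bval t) l) k) := by
  set z := bval (Fin.cons b t) with hz
  have hzv : ∀ n, z n = 1 ∨ z n = -1 := bval_val _
  have hz1 : z 1 = (if b then 1 else -1) := by rw [hz, bval_one, Fin.cons_zero]
  have h0 : L < y + dS' z 0 ∧ y + dS' z 0 < U := by rw [dS'_zero]; omega
  rw [upExit_succ h0 k]
  cases b
  · simp only [Bool.false_eq_true, if_false] at hz1 ⊢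
    refine upExit_congr fun l hl => ?_
    rw [dS'_shift_neg hz1 hzv l,
      dS_congr (z := fun n => z (n+1)) (z' := bval t) (bval_cons_shift false t) hl]
    ring
  · simp only [if_true] at hz1 ⊢
    refine upExit_congr fun l hl => ?_
    rw [dS'_shift_pos hz1 hzv l,
      dS'_congr (z := fun n => z (n+1)) (z' := bval t) (bval_cons_shift true t) hl]
    ring

/-- the one-step recursion for the plain walk -/
lemma betaD_succ (p q : ℝ) (L U x : ℤ) (hL : L < x) (hU : x < U) (k : ℕ) :
    betaD p q L U x (k+1) =
      p * gamD p q L U (x+1) k + q * betaD p q L U (x-1) k := by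
  unfold betaD gamD
  rw [sum_cons_split
        (fun s => if upExit L U (fun l => x + dS (bval s) l) (k+1) then wgt p q s else 0),
      Finset.mul_sum, Finset.mul_sum]
  congr 1
  · refine Finset.sum_congr rfl fun t _ => ?_
    rw [wgt_cons]
    rw [if_congr (upExit_cons_plain L U x hL hU k true t) rfl rfl]
    simp only [if_true, mul_ite, mul_zero]
  · refine Finset.sum_congr rfl fun t _ => ?_
    rw [wgt_cons]
    rw [if_congr (upExit_cons_plain L U x hL hU k false t) rfl rfl]
    simp only [Bool.false_eq_true, if_false, mul_ite, mul_zero]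

/-- the one-step recursion for the primed walk -/
lemma gamD_succ (p q : ℝ) (L U y : ℤ) (hL : L < y) (hU : y < U) (k : ℕ) :
    gamD p q L U y (k+1) =
      p * gamD p q L U (y+2) k + q * betaD p q L U (y-1) k := by
  unfold betaD gamD
  rw [sum_cons_split
        (fun s => if upExit L U (fun l => y + dS' (bval s) l) (k+1) then wgt p q s else 0),
      Finset.mul_sum, Finset.mul_sum]
  congr 1
  · refine Finset.sum_congr rfl fun t _ => ?_
    rw [wgt_cons]
    rw [if_congr (upExit_cons_primed L U y hL hU k true t) rfl rfl]
    simp only [if_true, mul_ite, mul_zero]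
  · refine Finset.sum_congr rfl fun t _ => ?_
    rw [wgt_cons]
    rw [if_congr (upExit_cons_primed L U y hL hU k false t) rfl rfl]
    simp only [Bool.false_eq_true, if_false, mul_ite, mul_zero]


section Bridge

variable {Ω : Type*} [MeasurableSpace Ω] {P : Measure Ω} [IsProbabilityMeasure P]
variable {ξ : ℕ → Ω → ℤ} {p : ℝ}

lemma meas_neg_one (hmeas : ∀ n, Measurable (ξ n)) (hval : ∀ n ω, ξ n ω = 1 ∨ ξ n ω = -1)
    (hp0 : 0 ≤ p) (n : ℕ) (hprobn : P {ω | ξ n ω = 1} = ENNReal.ofReal p) :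
    P {ω | ξ n ω = -1} = ENNReal.ofReal (1 - p) := by
  have hset : {ω | ξ n ω = -1} = {ω | ξ n ω = 1}ᶜ := by
    ext ω
    rcases hval n ω with h | h <;> simp [h]
  have hm : MeasurableSet {ω | ξ n ω = 1} := (hmeas n) (measurableSet_singleton 1)
  rw [hset, measure_compl hm (measure_ne_top _ _), hprobn, measure_univ,
    ← ENNReal.ofReal_one, ← ENNReal.ofReal_sub _ hp0]

/-- The master bridge: probability of a window-`k` cylinder event equals the
weighted count over sign patterns. -/
lemma bridge (hmeas : ∀ n, Measurable (ξ n))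
    (hindep : iIndepFun ξ P)
    (hval : ∀ n ω, ξ n ω = 1 ∨ ξ n ω = -1)
    (hprob : ∀ n, 1 ≤ n → P {ω | ξ n ω = 1} = ENNReal.ofReal p)
    (hp0 : 0 ≤ p) (hp1 : p ≤ 1)
    (D : (ℕ → ℤ) → ℕ → ℤ)
    (hD : ∀ (k : ℕ) (z z' : ℕ → ℤ), (∀ n, 1 ≤ n → n ≤ k → z n = z' n) →
      ∀ l ≤ k, D z l = D z' l)
    (L U x : ℤ) (k : ℕ) :
    (P {ω | upExit L U (fun l => x + D (fun n => ξ n ω) l) k}).toReal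
      = ∑ s : Fin k → Bool,
          if upExit L U (fun l => x + D (bval s) l) k then wgt p (1-p) s else 0 := by
  classical
  have agree_of_atom : ∀ (s : Fin k → Bool) (ω : Ω),
      ω ∈ (⋂ n ∈ Finset.Icc 1 k, (ξ n) ⁻¹' {bval s n}) →
      ∀ n, 1 ≤ n → n ≤ k → ξ n ω = bval s n := by
    intro s ω hω n h1 h2
    have := Set.mem_iInter₂.1 hω n (Finset.mem_Icc.2 ⟨h1, h2⟩)
    simpa using this
  have hatom_meas : ∀ s : Fin k → Bool,
      MeasurableSet (⋂ n ∈ Finset.Icc 1 k, (ξ n) ⁻¹' {bval s n}) := by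
    intro s
    exact MeasurableSet.biInter (Finset.countable_toSet _)
      fun n _ => (hmeas n) (measurableSet_singleton _)
  -- the event is the union of the good atoms
  have hE : {ω | upExit L U (fun l => x + D (fun n => ξ n ω) l) k}
      = ⋃ s ∈ Finset.univ.filter
          (fun s : Fin k → Bool => upExit L U (fun l => x + D (bval s) l) k),
          (⋂ n ∈ Finset.Icc 1 k, (ξ n) ⁻¹' {bval s n}) := by
    ext ω
    simp only [Set.mem_iUnion, Set.mem_setOf_eq, Finset.mem_filter, Finset.mem_univ,
      true_and, exists_prop]
    constructor
    · intro hω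
      set s : Fin k → Bool := fun i => decide (ξ (1 + (i : ℕ)) ω = 1) with hs
      have hagree : ∀ n, 1 ≤ n → n ≤ k → ξ n ω = bval s n := by
        intro n h1 h2
        have hn : 1 + (((⟨n - 1, by omega⟩ : Fin k)) : ℕ) = n := by simp; omega
        unfold bval
        rw [dif_pos ⟨h1, h2⟩, hs]
        simp only [hn]
        rcases hval n ω with h | h <;> simp [h]
      refine ⟨s, ?_, ?_⟩
      · refine (upExit_congr fun l hl => ?_).1 hω
        rw [hD k _ _ hagree l hl]
      · refine Set.mem_iInter₂.2 fun n hn => ?_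
        rw [Finset.mem_Icc] at hn
        exact (hagree n hn.1 hn.2).symm ▸ rfl
    · rintro ⟨s, hp1, hωs⟩
      have hagree := agree_of_atom s ω hωs
      refine (upExit_congr fun l hl => ?_).2 hp1
      rw [hD k _ _ hagree l hl]
  -- atoms are pairwise disjoint
  have hdisj : Set.PairwiseDisjoint
      (↑(Finset.univ.filter
          (fun s : Fin k → Bool => upExit L U (fun l => x + D (bval s) l) k)))
      (fun s : Fin k → Bool => ⋂ n ∈ Finset.Icc 1 k, (ξ n) ⁻¹' {bval s n}) := by
    intro s _ t _ hst
    have : ∃ i : Fin k, s i ≠ t i := by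
      by_contra hcon
      push_neg at hcon
      exact hst (funext hcon)
    obtain ⟨i, hi⟩ := this
    refine Set.disjoint_left.2 fun ω hωs hωt => ?_
    have hik := i.isLt
    have h1 : ξ (1 + (i : ℕ)) ω = bval s (1 + (i : ℕ)) :=
      agree_of_atom s ω hωs _ (by omega) (by omega)
    have h2 : ξ (1 + (i : ℕ)) ω = bval t (1 + (i : ℕ)) :=
      agree_of_atom t ω hωt _ (by omega) (by omega)
    have hfin : (⟨1 + (i : ℕ) - 1, by omega⟩ : Fin k) = i := by
      apply Fin.ext; simp
    have hbs : bval s (1 + (i : ℕ)) = (if s i then 1 else -1) := by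
      unfold bval; rw [dif_pos ⟨by omega, by omega⟩, hfin]
    have hbt : bval t (1 + (i : ℕ)) = (if t i then 1 else -1) := by
      unfold bval; rw [dif_pos ⟨by omega, by omega⟩, hfin]
    rw [hbs] at h1; rw [hbt] at h2
    cases hsi : s i <;> cases hti : t i <;>
      simp [hsi, hti] at h1 h2 hi <;> omega
  -- atom measure
  have hatomP : ∀ s : Fin k → Bool,
      P (⋂ n ∈ Finset.Icc 1 k, (ξ n) ⁻¹' {bval s n})
      = ∏ i : Fin k, (if s i then ENNReal.ofReal p else ENNReal.ofReal (1-p)) := by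
    intro s
    rw [hindep.measure_inter_preimage_eq_mul (Finset.Icc 1 k)
      (sets := fun n => {bval s n}) (fun n _ => measurableSet_singleton _)]
    have hterm : ∀ n ∈ Finset.Icc 1 k, P ((ξ n) ⁻¹' {bval s n})
        = (fun m => if bval s m = 1 then ENNReal.ofReal p else ENNReal.ofReal (1-p)) n := by
      intro n hn
      rw [Finset.mem_Icc] at hn
      show P ((ξ n) ⁻¹' {bval s n})
        = if bval s n = 1 then ENNReal.ofReal p else ENNReal.ofReal (1-p)
      rcases bval_val s n with h | h
      · rw [h, if_pos rfl]
        have h2 : (ξ n) ⁻¹' {(1 : ℤ)} = {ω | ξ n ω = 1} := rfl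
        rw [h2]; exact hprob n hn.1
      · rw [h, if_neg (by norm_num)]
        have h2 : (ξ n) ⁻¹' {(-1 : ℤ)} = {ω | ξ n ω = -1} := rfl
        rw [h2]; exact meas_neg_one hmeas hval hp0 n (hprob n hn.1)
    rw [Finset.prod_congr rfl hterm]
    rw [show Finset.Icc 1 k = Finset.Ico 1 (k+1) by rw [Finset.Ico_add_one_right_eq_Icc],
      Finset.prod_Ico_eq_prod_range]
    simp only [Nat.add_sub_cancel]
    rw [← Fin.prod_univ_eq_prod_range
      (fun i => if bval s (1 + i) = 1 then ENNReal.ofReal p else ENNReal.ofReal (1-p)) k]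
    refine Finset.prod_congr rfl fun i _ => ?_
    have hik := i.isLt
    have hfin : (⟨1 + (i : ℕ) - 1, by omega⟩ : Fin k) = i := by
      apply Fin.ext; simp
    have hbs : bval s (1 + (i : ℕ)) = (if s i then 1 else -1) := by
      unfold bval; rw [dif_pos ⟨by omega, by omega⟩, hfin]
    rw [hbs]
    cases hsi : s i
    · rw [if_neg (by simp), if_neg (by norm_num)]
    · rw [if_pos (by simp), if_pos rfl]
  -- put it together
  rw [hE, measure_biUnion_finset hdisj (fun s _ => hatom_meas s)]
  rw [Finset.sum_filter]
  rw [ENNReal.toReal_sum (by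
    intro s _
    split
    · rw [hatomP s]
      exact ENNReal.prod_ne_top fun i _ => by split <;> exact ENNReal.ofReal_ne_top
    · exact ENNReal.zero_ne_top)]
  refine Finset.sum_congr rfl fun s _ => ?_
  split
  · rw [hatomP s, ENNReal.toReal_prod]
    unfold wgt
    refine Finset.prod_congr rfl fun i _ => ?_
    split
    · exact ENNReal.toReal_ofReal hp0
    · exact ENNReal.toReal_ofReal (by linarith)
  · rfl

end Bridge



/-- auxiliary positive sequence controlling the homogeneous solution -/
noncomputable def Eseq (p q : ℝ) : ℕ → ℝ
  | 0 => q
  | 1 => p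
  | 2 => p ^ 2 / q
  | (n+3) => (p / q) * (p * Eseq p q (n+2) + Eseq p q (n+1))

lemma Eseq_zero (p q : ℝ) : Eseq p q 0 = q := by rw [Eseq]
lemma Eseq_one (p q : ℝ) : Eseq p q 1 = p := by rw [Eseq]
lemma Eseq_two (p q : ℝ) : Eseq p q 2 = p ^ 2 / q := by rw [Eseq]
lemma Eseq_succ3 (p q : ℝ) (n : ℕ) :
    Eseq p q (n+3) = (p / q) * (p * Eseq p q (n+2) + Eseq p q (n+1)) := by rw [Eseq]

lemma Eseq_pos {p q : ℝ} (hp : 0 < p) (hq : 0 < q) : ∀ n, 0 < Eseq p q n := by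
  intro n
  induction n using Nat.strong_induction_on with
  | _ n ih =>
    match n with
    | 0 => rw [Eseq_zero]; exact hq
    | 1 => rw [Eseq_one]; exact hp
    | 2 => rw [Eseq_two]; positivity
    | (n+3) =>
        have h1 := ih (n+2) (by omega)
        have h2 := ih (n+1) (by omega)
        rw [Eseq_succ3]
        have h3 : 0 < p * Eseq p q (n+2) + Eseq p q (n+1) := by positivity
        positivity

/-- uniqueness for the homogeneous system -/
lemma system_unique_aux (p : ℝ) (hp0 : 0 < p) (hp1 : p < 1) (L U : ℤ) (hLU : U - L ≥ 4)
    (h : ℤ → ℝ)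
    (hU0 : h U = 0)
    (he1 : h (U-1) = (1-p) * h (U-2))
    (he2 : h (U-2) = p*(1-p)*h (U-2) + (1-p)*h (U-3))
    (hint : ∀ x : ℤ, L+1 ≤ x → x ≤ U-3 →
      h x = p*(1-p)*h x + p*h (x+2) - p*(1-p)*h (x+1) + (1-p)*h (x-1))
    (hL0 : h L = 0) : ∀ x : ℤ, L ≤ x → x ≤ U → h x = 0 := by
  have hqne : (1 - p) ≠ 0 := by intro hc; linarith
  -- the difference sequence
  have hd : ∀ n : ℕ, (n : ℤ) ≤ U - L - 1 →
      h (U-1-(n:ℤ)) - h (U-(n:ℤ)) = h (U-2) * Eseq p (1-p) n := by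
    intro n
    induction n using Nat.strong_induction_on with
    | _ n ih =>
      match n with
      | 0 =>
          intro _
          push_cast
          rw [show U - 1 - (0:ℤ) = U - 1 by ring, show U - (0:ℤ) = U by ring, he1, hU0,
            Eseq_zero]
          ring
      | 1 =>
          intro _
          push_cast
          rw [show U - 1 - (1:ℤ) = U - 2 by ring, show U - (1:ℤ) = U - 1 by ring, he1,
            Eseq_one]
          ring
      | 2 =>
          intro _
          push_cast
          rw [show U - 1 - (2:ℤ) = U - 3 by ring, show U - (2:ℤ) = U - 2 by ring, Eseq_two]
          have haux : (h (U-3) - h (U-2)) * (1-p) = h (U-2) * p^2 := by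
            linear_combination -he2
          field_simp
          linear_combination haux
      | (n+3) =>
          intro hn
          have hncast : ((n:ℤ)+3) ≤ U - L - 1 := by push_cast at hn; linarith
          have hx : L + 1 ≤ U - 3 - (n:ℤ) := by omega
          have hx2 : U - 3 - (n:ℤ) ≤ U - 3 := by omega
          have hrec := hint (U - 3 - (n:ℤ)) hx hx2
          have ih2 := ih (n+2) (by omega) (by push_cast; omega)
          have ih1 := ih (n+1) (by omega) (by push_cast; omega)
          have e2 : h (U-3-(n:ℤ)) - h (U-2-(n:ℤ)) = h (U-2) * Eseq p (1-p) (n+2) := by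
            rw [show U-3-(n:ℤ) = U-1-((n:ℤ)+2) by ring, show U-2-(n:ℤ) = U-((n:ℤ)+2) by ring]
            push_cast at ih2 ⊢
            convert ih2 using 3 <;> ring
          have e1 : h (U-2-(n:ℤ)) - h (U-1-(n:ℤ)) = h (U-2) * Eseq p (1-p) (n+1) := by
            rw [show U-2-(n:ℤ) = U-1-((n:ℤ)+1) by ring, show U-1-(n:ℤ) = U-((n:ℤ)+1) by ring]
            push_cast at ih1 ⊢
            convert ih1 using 3 <;> ring
          push_cast
          rw [show U - 1 - ((n:ℤ)+3) = U - 4 - n by ring, show U - ((n:ℤ)+3) = U - 3 - n by ring]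
          rw [show U - 3 - (n:ℤ) + 2 = U - 1 - n by ring, show U - 3 - (n:ℤ) + 1 = U - 2 - n by ring,
            show U - 3 - (n:ℤ) - 1 = U - 4 - n by ring] at hrec
          have haux : (h (U-4-(n:ℤ)) - h (U-3-(n:ℤ))) * (1-p)
              = p^2 * (h (U-3-(n:ℤ)) - h (U-2-(n:ℤ))) + p * (h (U-2-(n:ℤ)) - h (U-1-(n:ℤ))) := by
            linear_combination -hrec
          rw [Eseq_succ3]
          field_simp
          linear_combination haux + p^2 * e2 + p * e1
  -- telescoping sum forces h (U-2) = 0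
  have hu0 : h (U - 2) = 0 := by
    set N : ℕ := (U - L).toNat with hN
    have hNval : (N : ℤ) = U - L := by rw [hN]; omega
    have hN4 : 4 ≤ N := by omega
    have htel : ∑ i ∈ Finset.range N, ((fun n => h (U - (n:ℤ))) i - (fun n => h (U - (n:ℤ))) (i+1))
        = h (U - (0:ℤ)) - h (U - (N:ℤ)) := by
      exact Finset.sum_range_sub' (fun n => h (U - (n:ℤ))) N
    have hzero : h (U - (0:ℤ)) - h (U - (N:ℤ)) = 0 := by
      rw [show U - (0:ℤ) = U by ring, show U - (N:ℤ) = L by omega, hU0, hL0]; ring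
    have hterm : ∀ i ∈ Finset.range N, (fun n => h (U - (n:ℤ))) i - (fun n => h (U - (n:ℤ))) (i+1)
        = -(h (U-2) * Eseq p (1-p) i) := by
      intro i hi
      rw [Finset.mem_range] at hi
      have := hd i (by omega)
      push_cast
      rw [show U - ((i:ℤ)+1) = U - 1 - i by ring]
      linarith [this]
    rw [Finset.sum_congr rfl hterm, hzero] at htel
    simp only [← Finset.mul_sum, Finset.sum_neg_distrib] at htel
    have hSpos : 0 < ∑ i ∈ Finset.range N, Eseq p (1-p) i :=
      Finset.sum_pos (fun i _ => Eseq_pos hp0 (by linarith) i)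
        (Finset.nonempty_range_iff.2 (by omega))
    have := neg_eq_zero.1 htel
    rcases mul_eq_zero.1 this with hc | hc
    · exact hc
    · exact absurd hc (ne_of_gt hSpos)
  -- now everything vanishes by downward induction
  have hall : ∀ n : ℕ, (n:ℤ) ≤ U - L → h (U - (n:ℤ)) = 0 := by
    intro n
    induction n using Nat.strong_induction_on with
    | _ n ih =>
      match n with
      | 0 => intro _; rw [show U - ((0:ℕ):ℤ) = U by push_cast; ring]; exact hU0
      | 1 => intro _
             rw [show U - ((1:ℕ):ℤ) = U - 1 by push_cast; ring, he1, hu0]; ring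
      | 2 => intro _; rw [show U - ((2:ℕ):ℤ) = U - 2 by push_cast; ring]; exact hu0
      | 3 => intro _
             rw [show U - ((3:ℕ):ℤ) = U - 3 by push_cast; ring]
             have hq : (1-p) * h (U-3) = 0 := by
               rw [hu0] at he2; linear_combination -he2
             rcases mul_eq_zero.1 hq with hc | hc
             · exact absurd hc hqne
             · exact hc
      | (n+4) =>
          intro hn
          have hncast : ((n:ℤ)+4) ≤ U - L := by push_cast at hn; linarith
          have hx : L + 1 ≤ U - ((n:ℤ)+3) := by omega
          have hx2 : U - ((n:ℤ)+3) ≤ U - 3 := by omega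
          have hrec := hint (U - ((n:ℤ)+3)) hx hx2
          have ih3 : h (U - ((n:ℤ)+3)) = 0 := by
            have := ih (n+3) (by omega) (by push_cast; omega)
            rwa [show U - ((n:ℤ)+3) = U - ((n+3 : ℕ):ℤ) by push_cast; ring]
          have ih2 : h (U - ((n:ℤ)+2)) = 0 := by
            have := ih (n+2) (by omega) (by push_cast; omega)
            rwa [show U - ((n:ℤ)+2) = U - ((n+2 : ℕ):ℤ) by push_cast; ring]
          have ih1 : h (U - ((n:ℤ)+1)) = 0 := by
            have := ih (n+1) (by omega) (by push_cast; omega)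
            rwa [show U - ((n:ℤ)+1) = U - ((n+1 : ℕ):ℤ) by push_cast; ring]
          rw [show U - ((n:ℤ)+3) + 2 = U - ((n:ℤ)+1) by ring,
            show U - ((n:ℤ)+3) + 1 = U - ((n:ℤ)+2) by ring,
            show U - ((n:ℤ)+3) - 1 = U - ((n:ℤ)+4) by ring, ih3, ih2, ih1] at hrec
          have hq : (1-p) * h (U - ((n:ℤ)+4)) = 0 := by linear_combination -hrec
          rw [show U - ((n+4 : ℕ):ℤ) = U - ((n:ℤ)+4) by push_cast; ring]
          rcases mul_eq_zero.1 hq with hc | hc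
          · exact absurd hc hqne
          · exact hc
  intro x hx1 hx2
  have hx3 : ((U - x).toNat : ℤ) = U - x := by omega
  have := hall (U - x).toNat (by omega)
  rwa [show U - ((U - x).toNat : ℤ) = x by omega] at this


end LadderAux

lemma mem_ladderB_iff {Ω : Type*} [MeasurableSpace Ω] (ξ : ℕ → Ω → ℤ) (L U x : ℤ)
    (k : ℕ) (ω : Ω) :
    ω ∈ ladderB ξ L U x k ↔ LadderAux.upExit L U (fun l => x + ladderS ξ l ω) k := by
  constructor
  · intro hω
    simp only [ladderB, Set.mem_iUnion, Finset.mem_range, Set.mem_setOf_eq] at hω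
    obtain ⟨l, hlk, hτ, hUle⟩ := hω
    have hex : ∃ m ≤ k, (x + ladderS ξ m ω ≤ L ∨ U ≤ x + ladderS ξ m ω) :=
      ⟨l, by omega, Or.inr hUle⟩
    rw [ladderTau, if_pos hex] at hτ
    have hne : {m | m ≤ k ∧ (x + ladderS ξ m ω ≤ L ∨ U ≤ x + ladderS ξ m ω)}.Nonempty :=
      ⟨l, by omega, Or.inr hUle⟩
    have hmem := Nat.sInf_mem hne
    rw [hτ] at hmem
    refine ⟨l, hmem.1, fun m hm => ?_, hUle⟩
    have hmk : m ≤ k := by omega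
    have hnotin : m ∉ {m | m ≤ k ∧ (x + ladderS ξ m ω ≤ L ∨ U ≤ x + ladderS ξ m ω)} :=
      Nat.notMem_of_lt_sInf (by rw [hτ]; exact hm)
    have h2 : ¬(x + ladderS ξ m ω ≤ L ∨ U ≤ x + ladderS ξ m ω) :=
      fun hor => hnotin ⟨hmk, hor⟩
    push_neg at h2
    exact h2
  · rintro ⟨t, htk, hin, hup⟩
    have hex : ∃ m ≤ k, (x + ladderS ξ m ω ≤ L ∨ U ≤ x + ladderS ξ m ω) :=
      ⟨t, htk, Or.inr hup⟩
    have hne : {m | m ≤ k ∧ (x + ladderS ξ m ω ≤ L ∨ U ≤ x + ladderS ξ m ω)}.Nonempty :=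
      ⟨t, htk, Or.inr hup⟩
    have hSinf : sInf {m | m ≤ k ∧ (x + ladderS ξ m ω ≤ L ∨ U ≤ x + ladderS ξ m ω)} = t := by
      refine le_antisymm (Nat.sInf_le ⟨htk, Or.inr hup⟩) ?_
      by_contra hcon
      push_neg at hcon
      have hm := Nat.sInf_mem hne
      have h3 := hin _ hcon
      simp only [] at h3
      rcases hm.2 with h | h <;> omega
    simp only [ladderB, Set.mem_iUnion, Finset.mem_range, Set.mem_setOf_eq]
    exact ⟨t, by omega, by rw [ladderTau, if_pos hex, hSinf], hup⟩

/-- The limit `β(x) = lim_k β_k(x)` satisfies the linear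
difference system (7), and is the unique solution of that system on the
integers of `[L, U]`. -/
theorem ladder_beta_system_unique (p q : ℝ) (hp0 : 0 < p) (hp1 : p < 1) (hq : q = 1 - p)
    (P : Measure Ω) [IsProbabilityMeasure P]
    (ξ : ℕ → Ω → ℤ) (hmeas : ∀ n, Measurable (ξ n))
    (hindep : iIndepFun ξ P)
    (hval : ∀ n ω, ξ n ω = 1 ∨ ξ n ω = -1)
    (hprob : ∀ n, 1 ≤ n → P {ω | ξ n ω = 1} = ENNReal.ofReal p)
    (L U : ℤ) (hLU : U - L ≥ 4)
    (b : ℤ → ℝ)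
    (hb : ∀ x : ℤ, L ≤ x → x ≤ U →
      Tendsto (fun k => (P (ladderB ξ L U x k)).toReal) atTop (nhds (b x))) :
    betaSystem p q L U b ∧
    ∀ c : ℤ → ℝ, betaSystem p q L U c →
      ∀ x : ℤ, L ≤ x → x ≤ U → c x = b x := by
  classical
  subst hq
  open LadderAux in
  have hq0 : (0:ℝ) < 1 - p := by linarith
  have hsum1 : p + (1 - p) = 1 := by ring
  have hLU' : L < U := by omega
  -- bridge for the plain walk
  have hSrfl : ∀ (l : ℕ) (ω : Ω), ladderS ξ l ω = LadderAux.dS (fun n => ξ n ω) l :=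
    fun l ω => rfl
  have hBset : ∀ (x : ℤ) (k : ℕ), ladderB ξ L U x k
      = {ω | LadderAux.upExit L U (fun l => x + LadderAux.dS (fun n => ξ n ω) l) k} := by
    intro x k
    ext ω
    rw [Set.mem_setOf_eq, mem_ladderB_iff]
    exact Iff.of_eq (by simp only [hSrfl])
  have hbeta : ∀ (x : ℤ) (k : ℕ),
      (P (ladderB ξ L U x k)).toReal = LadderAux.betaD p (1-p) L U x k := by
    intro x k
    rw [hBset]
    exact LadderAux.bridge hmeas hindep hval hprob hp0.le hp1.le
      LadderAux.dS (fun k z z' h l hl => LadderAux.dS_congr h hl) L U x k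
  have hgam : ∀ (y : ℤ) (k : ℕ),
      (P {ω | LadderAux.upExit L U (fun l => y + LadderAux.dS' (fun n => ξ n ω) l) k}).toReal
        = LadderAux.gamD p (1-p) L U y k := by
    intro y k
    exact LadderAux.bridge hmeas hindep hval hprob hp0.le hp1.le
      LadderAux.dS' (fun k z z' h l hl => LadderAux.dS'_congr h hl) L U y k
  -- convergence of the primed exit probabilities
  have hgmono : ∀ y : ℤ, Monotone (fun k => LadderAux.gamD p (1-p) L U y k) := by
    intro y k k' hkk
    simp only [← hgam]
    refine ENNReal.toReal_mono (measure_ne_top _ _) (measure_mono fun ω hω => ?_)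
    exact LadderAux.upExit_mono hkk hω
  have hgle1 : ∀ (y : ℤ) (k : ℕ), LadderAux.gamD p (1-p) L U y k ≤ 1 := by
    intro y k
    rw [← hgam]
    have h1 := ENNReal.toReal_mono (by simp) (prob_le_one
      (μ := P) (s := {ω | LadderAux.upExit L U
        (fun l => y + LadderAux.dS' (fun n => ξ n ω) l) k}))
    simpa using h1
  set g : ℤ → ℝ := fun y => ⨆ k, LadderAux.gamD p (1-p) L U y k with hgdef
  have hgtend : ∀ y : ℤ, Tendsto (fun k => LadderAux.gamD p (1-p) L U y k) atTop (nhds (g y)) := by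
    intro y
    exact tendsto_atTop_ciSup (hgmono y) ⟨1, by rintro _ ⟨k, rfl⟩; exact hgle1 y k⟩
  have hbtend : ∀ x : ℤ, L ≤ x → x ≤ U →
      Tendsto (fun k => LadderAux.betaD p (1-p) L U x k) atTop (nhds (b x)) := by
    intro x h1 h2
    have := hb x h1 h2
    simpa only [hbeta] using this
  -- boundary values
  have hgtop : ∀ y : ℤ, U ≤ y → g y = 1 := by
    intro y hy
    refine tendsto_nhds_unique (hgtend y) ?_
    have hconst : ∀ k, LadderAux.gamD p (1-p) L U y k = 1 := by
      intro k
      rw [LadderAux.gamD_top p (1-p) L U y k hy, hsum1, one_pow]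
    simp only [hconst]
    exact tendsto_const_nhds
  have hbU : b U = 1 := by
    refine tendsto_nhds_unique (hbtend U (by omega) le_rfl) ?_
    have hconst : ∀ k, LadderAux.betaD p (1-p) L U U k = 1 := by
      intro k
      rw [LadderAux.betaD_top p (1-p) L U U k le_rfl, hsum1, one_pow]
    simp only [hconst]
    exact tendsto_const_nhds
  have hbL : b L = 0 := by
    refine tendsto_nhds_unique (hbtend L le_rfl (by omega)) ?_
    have hconst : ∀ k, LadderAux.betaD p (1-p) L U L k = 0 := fun k =>
      LadderAux.betaD_bot p (1-p) L U L k hLU' le_rfl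
    simp only [hconst]
    exact tendsto_const_nhds
  -- the two limit equations
  have E1 : ∀ x : ℤ, L < x → x < U → b x = p * g (x+1) + (1-p) * b (x-1) := by
    intro x h1 h2
    have hrec : (fun k => LadderAux.betaD p (1-p) L U x (k+1))
        = fun k => p * LadderAux.gamD p (1-p) L U (x+1) k
            + (1-p) * LadderAux.betaD p (1-p) L U (x-1) k := by
      funext k
      exact LadderAux.betaD_succ p (1-p) L U x h1 h2 k
    have hlhs : Tendsto (fun k => LadderAux.betaD p (1-p) L U x (k+1)) atTop (nhds (b x)) :=
      (hbtend x (by omega) (by omega)).comp (tendsto_add_atTop_nat 1)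
    rw [hrec] at hlhs
    have hrhs : Tendsto (fun k => p * LadderAux.gamD p (1-p) L U (x+1) k
        + (1-p) * LadderAux.betaD p (1-p) L U (x-1) k) atTop
        (nhds (p * g (x+1) + (1-p) * b (x-1))) :=
      ((hgtend (x+1)).const_mul p).add ((hbtend (x-1) (by omega) (by omega)).const_mul (1-p))
    exact tendsto_nhds_unique hlhs hrhs
  have E2 : ∀ y : ℤ, L < y → y < U → g y = p * g (y+2) + (1-p) * b (y-1) := by
    intro y h1 h2
    have hrec : (fun k => LadderAux.gamD p (1-p) L U y (k+1))
        = fun k => p * LadderAux.gamD p (1-p) L U (y+2) k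
            + (1-p) * LadderAux.betaD p (1-p) L U (y-1) k := by
      funext k
      exact LadderAux.gamD_succ p (1-p) L U y h1 h2 k
    have hlhs : Tendsto (fun k => LadderAux.gamD p (1-p) L U y (k+1)) atTop (nhds (g y)) :=
      (hgtend y).comp (tendsto_add_atTop_nat 1)
    rw [hrec] at hlhs
    have hrhs : Tendsto (fun k => p * LadderAux.gamD p (1-p) L U (y+2) k
        + (1-p) * LadderAux.betaD p (1-p) L U (y-1) k) atTop
        (nhds (p * g (y+2) + (1-p) * b (y-1))) :=
      ((hgtend (y+2)).const_mul p).add ((hbtend (y-1) (by omega) (by omega)).const_mul (1-p))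
    exact tendsto_nhds_unique hlhs hrhs
  -- assemble the system
  have hsys : betaSystem p (1-p) L U b := by
    refine ⟨hbU, ?_, ?_, ?_, hbL⟩
    · have hA := E1 (U-1) (by omega) (by omega)
      rw [show U - 1 + 1 = U by ring, show U - 1 - 1 = U - 2 by ring, hgtop U le_rfl] at hA
      linarith
    · have hA := E1 (U-2) (by omega) (by omega)
      rw [show U - 2 + 1 = U - 1 by ring, show U - 2 - 1 = U - 3 by ring] at hA
      have hB := E2 (U-1) (by omega) (by omega)
      rw [show U - 1 + 2 = U + 1 by ring, show U - 1 - 1 = U - 2 by ring,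
        hgtop (U+1) (by omega)] at hB
      linear_combination hA + p * hB
    · intro x hx1 hx2
      have hA := E1 x (by omega) (by omega)
      have hB := E2 (x+1) (by omega) (by omega)
      rw [show x + 1 + 2 = x + 3 by ring, show x + 1 - 1 = x by ring] at hB
      have hC := E1 (x+2) (by omega) (by omega)
      rw [show x + 2 + 1 = x + 3 by ring, show x + 2 - 1 = x + 1 by ring] at hC
      linear_combination hA + p * hB - p * hC
  refine ⟨hsys, fun c hc x hx1 hx2 => ?_⟩
  -- uniqueness via the homogeneous system
  obtain ⟨hc1, hc2, hc3, hc4, hc5⟩ := hc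
  obtain ⟨hb1, hb2, hb3, hb4, hb5⟩ := hsys
  have key := LadderAux.system_unique_aux p hp0 hp1 L U hLU (fun z => c z - b z)
    (by simp [hc1, hb1])
    (by linear_combination hc2 - hb2)
    (by linear_combination hc3 - hb3)
    (by intro z hz1 hz2
        linear_combination (hc4 z hz1 hz2) - (hb4 z hz1 hz2))
    (by simp [hc5, hb5])
  have := key x hx1 hx2
  linarith


end
end

section
/- Suppose U−L ≥ 4. Then for every integer x with L ≤ x ≤ U, α(x)+β(x)=1; that is, starting from x the walk exits the interval (L,U) within finitely many steps almost surely. -/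
open MeasureTheory ProbabilityTheory Filter
open scoped ENNReal Classical

noncomputable section

variable {Ω : Type*} [MeasurableSpace Ω]

lemma measurable_ladderX {ξ : ℕ → Ω → ℤ} (hm : ∀ n, Measurable (ξ n)) (k : ℕ) :
    Measurable (ladderX ξ k) := by
  unfold ladderX
  exact Measurable.ite (MeasurableSet.const (k = 1))
    (Measurable.ite ((hm 1) (measurableSet_singleton 1)) measurable_const measurable_const)
    (Measurable.ite ((hm k) (measurableSet_singleton (-1))) measurable_const
      (Measurable.ite ((hm (k - 1)) (measurableSet_singleton 1)) measurable_const
        measurable_const))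

lemma measurable_ladderS {ξ : ℕ → Ω → ℤ} (hm : ∀ n, Measurable (ξ n)) (n : ℕ) :
    Measurable (ladderS ξ n) :=
  Finset.measurable_sum _ fun k _ => measurable_ladderX hm k

/-- The exit set at time `l`. -/
def ExitG (ξ : ℕ → Ω → ℤ) (L U x : ℤ) (l : ℕ) : Set Ω :=
  {ω | x + ladderS ξ l ω ≤ L ∨ U ≤ x + ladderS ξ l ω}

lemma measurableSet_ExitG {ξ : ℕ → Ω → ℤ} (hm : ∀ n, Measurable (ξ n)) (L U x : ℤ) (l : ℕ) :
    MeasurableSet (ExitG ξ L U x l) :=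
  MeasurableSet.union
    (measurableSet_le (measurable_const.add (measurable_ladderS hm l)) measurable_const)
    (measurableSet_le measurable_const (measurable_const.add (measurable_ladderS hm l)))


lemma ladderTau_eq_iff {ξ : ℕ → Ω → ℤ} {L U x : ℤ} {k l : ℕ} {ω : Ω}
    (hlk : l ≤ k) (hGl : ω ∈ ExitG ξ L U x l) :
    ladderTau ξ L U x k ω = l ↔ ∀ j < l, ω ∉ ExitG ξ L U x j := by
  have hGl' : x + ladderS ξ l ω ≤ L ∨ U ≤ x + ladderS ξ l ω := hGl
  unfold ladderTau
  rw [if_pos ⟨l, hlk, hGl'⟩]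
  constructor
  · intro h j hj hGj
    have : sInf {l | l ≤ k ∧ (x + ladderS ξ l ω ≤ L ∨ U ≤ x + ladderS ξ l ω)} ≤ j :=
      Nat.sInf_le ⟨hj.le.trans hlk, hGj⟩
    omega
  · intro h
    refine le_antisymm (Nat.sInf_le ⟨hlk, hGl'⟩) ?_
    by_contra hlt
    push_neg at hlt
    have hne : {l | l ≤ k ∧ (x + ladderS ξ l ω ≤ L ∨ U ≤ x + ladderS ξ l ω)}.Nonempty :=
      ⟨l, hlk, hGl'⟩
    exact h _ hlt (Nat.sInf_mem hne).2

lemma ladderA_eq (ξ : ℕ → Ω → ℤ) (L U x : ℤ) (k : ℕ) :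
    ladderA ξ L U x k = ⋃ l ∈ Finset.range (k + 1),
      ({ω | x + ladderS ξ l ω ≤ L} ∩ ⋂ j ∈ Finset.range l, (ExitG ξ L U x j)ᶜ) := by
  ext ω
  simp only [ladderA, Set.mem_iUnion, Set.mem_setOf_eq, Set.mem_inter_iff, Set.mem_iInter,
    Set.mem_compl_iff, Finset.mem_range, exists_prop]
  constructor
  · rintro ⟨l, hl, htau, hle⟩
    have hlk : l ≤ k := by omega
    have hG : ω ∈ ExitG ξ L U x l := Or.inl hle
    exact ⟨l, hl, hle, fun j hj => (ladderTau_eq_iff hlk hG).1 htau j hj⟩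
  · rintro ⟨l, hl, hle, hmin⟩
    have hlk : l ≤ k := by omega
    have hG : ω ∈ ExitG ξ L U x l := Or.inl hle
    exact ⟨l, hl, (ladderTau_eq_iff hlk hG).2 hmin, hle⟩

lemma ladderB_eq (ξ : ℕ → Ω → ℤ) (L U x : ℤ) (k : ℕ) :
    ladderB ξ L U x k = ⋃ l ∈ Finset.range (k + 1),
      ({ω | U ≤ x + ladderS ξ l ω} ∩ ⋂ j ∈ Finset.range l, (ExitG ξ L U x j)ᶜ) := by
  ext ω
  simp only [ladderB, Set.mem_iUnion, Set.mem_setOf_eq, Set.mem_inter_iff, Set.mem_iInter,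
    Set.mem_compl_iff, Finset.mem_range, exists_prop]
  constructor
  · rintro ⟨l, hl, htau, hle⟩
    have hlk : l ≤ k := by omega
    have hG : ω ∈ ExitG ξ L U x l := Or.inr hle
    exact ⟨l, hl, hle, fun j hj => (ladderTau_eq_iff hlk hG).1 htau j hj⟩
  · rintro ⟨l, hl, hle, hmin⟩
    have hlk : l ≤ k := by omega
    have hG : ω ∈ ExitG ξ L U x l := Or.inr hle
    exact ⟨l, hl, (ladderTau_eq_iff hlk hG).2 hmin, hle⟩

lemma ladderA_union_ladderB (ξ : ℕ → Ω → ℤ) (L U x : ℤ) (k : ℕ) :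
    ladderA ξ L U x k ∪ ladderB ξ L U x k = ⋃ l ∈ Finset.range (k + 1), ExitG ξ L U x l := by
  rw [ladderA_eq, ladderB_eq]
  ext ω
  simp only [Set.mem_union, Set.mem_iUnion, Set.mem_inter_iff, Set.mem_iInter, Set.mem_setOf_eq,
    Set.mem_compl_iff, Finset.mem_range, exists_prop]
  constructor
  · rintro (⟨l, hl, hle, _⟩ | ⟨l, hl, hle, _⟩)
    · exact ⟨l, hl, Or.inl hle⟩
    · exact ⟨l, hl, Or.inr hle⟩
  · rintro ⟨l, hl, hG⟩
    have hex : ∃ m, ω ∈ ExitG ξ L U x m := ⟨l, hG⟩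
    set m := Nat.find hex with hm
    have hmem : ω ∈ ExitG ξ L U x m := Nat.find_spec hex
    have hmin : ∀ j < m, ω ∉ ExitG ξ L U x j := fun j hj => Nat.find_min hex hj
    have hml : m ≤ l := Nat.find_min' hex hG
    rcases hmem with hlow | hhigh
    · exact Or.inl ⟨m, by omega, hlow, hmin⟩
    · exact Or.inr ⟨m, by omega, hhigh, hmin⟩

lemma ladderA_disjoint_ladderB (ξ : ℕ → Ω → ℤ) {L U : ℤ} (hLU : L < U) (x : ℤ) (k : ℕ) :
    Disjoint (ladderA ξ L U x k) (ladderB ξ L U x k) := by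
  rw [ladderA_eq, ladderB_eq, Set.disjoint_left]
  intro ω hA hB
  simp only [Set.mem_iUnion, Set.mem_inter_iff, Set.mem_iInter, Set.mem_setOf_eq,
    Set.mem_compl_iff, Finset.mem_range, exists_prop] at hA hB
  obtain ⟨l, hl, hle, hminA⟩ := hA
  obtain ⟨l', hl', hge, hminB⟩ := hB
  rcases lt_trichotomy l l' with h | h | h
  · exact hminB l h (Or.inl hle)
  · subst h; omega
  · exact hminA l' h (Or.inr hge)


def ladderBlock (N j : ℕ) : Finset ℕ := Finset.Icc (j * N + 1) (j * N + N)

def ladderD (ξ : ℕ → Ω → ℤ) (N j : ℕ) : Set Ω :=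
  ⋂ n ∈ ladderBlock N j, ξ n ⁻¹' ({-1} : Set ℤ)

lemma exit_ae {p : ℝ} (hp0 : 0 < p) (hp1 : p < 1)
    (P : Measure Ω) [IsProbabilityMeasure P]
    (ξ : ℕ → Ω → ℤ) (hmeas : ∀ n, Measurable (ξ n))
    (hindep : iIndepFun ξ P)
    (hval : ∀ n ω, ξ n ω = 1 ∨ ξ n ω = -1)
    (hprob : ∀ n, 1 ≤ n → P {ω | ξ n ω = 1} = ENNReal.ofReal p)
    {L U : ℤ} (x : ℤ) (hLU : U - L ≥ 4) :
    P (⋃ k, ⋃ l ∈ Finset.range (k + 1), ExitG ξ L U x l) = 1 := by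
  set N : ℕ := (U - L).toNat with hNdef
  have hN : (N : ℤ) = U - L := Int.toNat_of_nonneg (by omega)
  have hN1 : 1 ≤ N := by omega
  have hDm : ∀ j, MeasurableSet (ladderD ξ N j) := fun j =>
    Finset.measurableSet_biInter _ fun n _ => (hmeas n) (measurableSet_singleton _)
  have hfact : ∀ s : Finset ℕ,
      P (⋂ n ∈ s, ξ n ⁻¹' ({-1} : Set ℤ)) = ∏ n ∈ s, P (ξ n ⁻¹' ({-1} : Set ℤ)) :=
    fun s => hindep.meas_biInter fun i _ => ⟨{-1}, measurableSet_singleton _, rfl⟩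
  have hq : ∀ n, 1 ≤ n → P (ξ n ⁻¹' ({-1} : Set ℤ)) = ENNReal.ofReal (1 - p) := by
    intro n hn
    have hset : ξ n ⁻¹' ({-1} : Set ℤ) = {ω | ξ n ω = 1}ᶜ := by
      ext ω
      simp only [Set.mem_preimage, Set.mem_singleton_iff, Set.mem_compl_iff, Set.mem_setOf_eq]
      rcases hval n ω with h | h <;> simp [h]
    have hms : MeasurableSet {ω | ξ n ω = 1} := (hmeas n) (measurableSet_singleton 1)
    rw [hset, prob_compl_eq_one_sub hms, hprob n hn, ← ENNReal.ofReal_one,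
      ← ENNReal.ofReal_sub _ hp0.le]
  have hblkdisj : ∀ i j : ℕ, i ≠ j → Disjoint (ladderBlock N i) (ladderBlock N j) := by
    intro i j hij
    rw [Finset.disjoint_left]
    intro n hni hnj
    simp only [ladderBlock, Finset.mem_Icc] at hni hnj
    rcases Nat.lt_or_ge i j with h | h
    · have h2 : i * N + N ≤ j * N := by
        calc i * N + N = (i + 1) * N := by ring
        _ ≤ j * N := Nat.mul_le_mul_right N h
      linarith [hni.2, hnj.1]
    · have h' : j < i := by omega
      have h2 : j * N + N ≤ i * N := by
        calc j * N + N = (j + 1) * N := by ring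
        _ ≤ i * N := Nat.mul_le_mul_right N h'
      linarith [hnj.2, hni.1]
  have hPD : ∀ j, P (ladderD ξ N j) = ENNReal.ofReal (1 - p) ^ N := by
    intro j
    have hc : ∀ n ∈ ladderBlock N j, P (ξ n ⁻¹' ({-1} : Set ℤ)) = ENNReal.ofReal (1 - p) := by
      intro n hn
      refine hq n ?_
      simp only [ladderBlock, Finset.mem_Icc] at hn
      omega
    rw [ladderD, hfact (ladderBlock N j), Finset.prod_congr rfl hc, Finset.prod_const]
    congr 1
    rw [ladderBlock, Nat.card_Icc]
    omega
  have hindepD : iIndepSet (ladderD ξ N) P := by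
    rw [iIndepSet_iff_meas_biInter hDm]
    intro s
    have h1 : (⋂ j ∈ s, ladderD ξ N j)
        = ⋂ n ∈ s.biUnion (ladderBlock N), ξ n ⁻¹' ({-1} : Set ℤ) :=
      (Finset.set_biInter_biUnion s (ladderBlock N) _).symm
    rw [h1, hfact, Finset.prod_biUnion (fun i _ j _ hij => hblkdisj i j hij)]
    exact Finset.prod_congr rfl fun j _ => (hfact (ladderBlock N j)).symm
  have htsum : ∑' j, P (ladderD ξ N j) = ∞ := by
    simp only [hPD]
    exact ENNReal.tsum_const_eq_top_of_ne_zero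
      (pow_ne_zero _ (ENNReal.ofReal_pos.mpr (by linarith)).ne')
  have hlimsup : P (limsup (ladderD ξ N) atTop) = 1 :=
    measure_limsup_eq_one hDm hindepD htsum
  have hstep : ∀ j ω, ω ∈ ladderD ξ N j → ∀ m, m ≤ N →
      ladderS ξ (j * N + m) ω = ladderS ξ (j * N) ω - m := by
    intro j ω hω
    simp only [ladderD, ladderBlock, Set.mem_iInter, Finset.mem_Icc, Set.mem_preimage,
      Set.mem_singleton_iff, and_imp] at hω
    intro m
    induction m with
    | zero => intro _; simp
    | succ i ih =>
      intro hm
      have hb1 : j * N + 1 ≤ j * N + i + 1 := by omega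
      have hb2 : j * N + i + 1 ≤ j * N + N := by omega
      have hξ : ξ (j * N + i + 1) ω = -1 := hω _ hb1 hb2
      have hX : ladderX ξ (j * N + i + 1) ω = -1 := by
        unfold ladderX
        rcases eq_or_ne (j * N + i + 1) 1 with h1 | h1
        · have h2 : ξ 1 ω = -1 := by rw [← h1]; exact hξ
          rw [if_pos h1, if_neg (by rw [h2]; decide)]
        · rw [if_neg h1, if_pos hξ]
      have hsum : ladderS ξ (j * N + i + 1) ω
          = ladderS ξ (j * N + i) ω + ladderX ξ (j * N + i + 1) ω := by
        unfold ladderS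
        rw [Finset.sum_Icc_succ_top (by omega : 1 ≤ j * N + i + 1)]
      have hmi : i ≤ N := Nat.le_of_succ_le hm
      have hii := ih hmi
      rw [show j * N + (i + 1) = j * N + i + 1 from rfl, hsum, hX, hii]
      push_cast
      ring
  have hDsub : ∀ j, ladderD ξ N j ⊆ ⋃ l ∈ Finset.range (j * N + N + 1), ExitG ξ L U x l := by
    intro j ω hω
    by_contra hnot
    have hin : ∀ l ≤ j * N + N, L < x + ladderS ξ l ω ∧ x + ladderS ξ l ω < U := by
      intro l hl
      by_contra hcon
      have hGmem : ω ∈ ExitG ξ L U x l := by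
        show x + ladderS ξ l ω ≤ L ∨ U ≤ x + ladderS ξ l ω
        omega
      exact hnot (Set.mem_biUnion (Finset.mem_range.mpr (Nat.lt_succ_of_le hl)) hGmem)
    have h0 := hin (j * N) (Nat.le_add_right _ _)
    have hNf := hin (j * N + N) le_rfl
    have hs := hstep j ω hω N le_rfl
    omega
  have hsub : limsup (ladderD ξ N) atTop ⊆ ⋃ k, ⋃ l ∈ Finset.range (k + 1), ExitG ξ L U x l := by
    refine le_trans limsup_le_iSup ?_
    refine Set.iUnion_subset fun j => (hDsub j).trans ?_
    exact Set.subset_iUnion (fun k => ⋃ l ∈ Finset.range (k + 1), ExitG ξ L U x l) (j * N + N)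
  refine le_antisymm prob_le_one ?_
  calc (1 : ℝ≥0∞) = P (limsup (ladderD ξ N) atTop) := hlimsup.symm
    _ ≤ _ := measure_mono hsub


lemma measurableSet_ladderB {ξ : ℕ → Ω → ℤ} (hm : ∀ n, Measurable (ξ n)) (L U x : ℤ) (k : ℕ) :
    MeasurableSet (ladderB ξ L U x k) := by
  rw [ladderB_eq]
  refine (Finset.range (k + 1)).measurableSet_biUnion fun l _ => ?_
  exact (measurableSet_le measurable_const
      (measurable_const.add (measurable_ladderS hm l))).inter
    (Finset.measurableSet_biInter _ fun j _ => (measurableSet_ExitG hm L U x j).compl)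

/-- If `U - L ≥ 4` then `α(x) + β(x) = 1` for every integer
`x ∈ [L, U]`: the walk exits the interval `(L, U)` in finite time a.s. -/
theorem ladder_alpha_add_beta_eq_one (p : ℝ) (hp0 : 0 < p) (hp1 : p < 1)
    (P : Measure Ω) [IsProbabilityMeasure P]
    (ξ : ℕ → Ω → ℤ) (hmeas : ∀ n, Measurable (ξ n))
    (hindep : iIndepFun ξ P)
    (hval : ∀ n ω, ξ n ω = 1 ∨ ξ n ω = -1)
    (hprob : ∀ n, 1 ≤ n → P {ω | ξ n ω = 1} = ENNReal.ofReal p)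
    (L U : ℤ) (hLU : U - L ≥ 4)
    (a b : ℤ → ℝ)
    (ha : ∀ x : ℤ, L ≤ x → x ≤ U →
      Tendsto (fun k => (P (ladderA ξ L U x k)).toReal) atTop (nhds (a x)))
    (hb : ∀ x : ℤ, L ≤ x → x ≤ U →
      Tendsto (fun k => (P (ladderB ξ L U x k)).toReal) atTop (nhds (b x))) :
    ∀ x : ℤ, L ≤ x → x ≤ U → a x + b x = 1 := by
  intro x hxL hxU
  have hLltU : L < U := by omega
  have hPk : ∀ k, P (ladderA ξ L U x k) + P (ladderB ξ L U x k)
      = P (⋃ l ∈ Finset.range (k + 1), ExitG ξ L U x l) := by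
    intro k
    rw [← measure_union (ladderA_disjoint_ladderB ξ hLltU x k) (measurableSet_ladderB hmeas L U x k),
      ladderA_union_ladderB]
  have hEmono : Monotone (fun k => ⋃ l ∈ Finset.range (k + 1), ExitG ξ L U x l) := by
    intro k k' hk ω hω
    simp only [Set.mem_iUnion, Finset.mem_range, exists_prop] at hω ⊢
    obtain ⟨l, hl, h⟩ := hω
    exact ⟨l, by omega, h⟩
  have htendsto : Tendsto (fun k => P (⋃ l ∈ Finset.range (k + 1), ExitG ξ L U x l)) atTop
      (nhds (P (⋃ k, ⋃ l ∈ Finset.range (k + 1), ExitG ξ L U x l))) :=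
    tendsto_measure_iUnion_atTop hEmono
  rw [exit_ae hp0 hp1 P ξ hmeas hindep hval hprob x hLU] at htendsto
  have htoReal : Tendsto (fun k => (P (⋃ l ∈ Finset.range (k + 1), ExitG ξ L U x l)).toReal)
      atTop (nhds 1) := by
    have h1 := (ENNReal.tendsto_toReal (by simp : (1 : ℝ≥0∞) ≠ ⊤)).comp htendsto
    simpa [Function.comp_def] using h1
  have hfun : ∀ k, (P (ladderA ξ L U x k)).toReal + (P (ladderB ξ L U x k)).toReal
      = (P (⋃ l ∈ Finset.range (k + 1), ExitG ξ L U x l)).toReal := by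
    intro k
    rw [← ENNReal.toReal_add (measure_ne_top _ _) (measure_ne_top _ _), hPk k]
  have hABtend : Tendsto
      (fun k => (P (ladderA ξ L U x k)).toReal + (P (ladderB ξ L U x k)).toReal)
      atTop (nhds (a x + b x)) := (ha x hxL hxU).add (hb x hxL hxU)
  have h2 : Tendsto
      (fun k => (P (ladderA ξ L U x k)).toReal + (P (ladderB ξ L U x k)).toReal)
      atTop (nhds 1) := by
    simp only [hfun]
    exact htoReal
  exact tendsto_nhds_unique hABtend h2

end
end

section
/- For any real numbers L<U and any real x with L ≤ x ≤ U (no integrality or gap assumption on L, U, x), the limits α(x)=lim_{k→∞} α_k(x) and β(x)=lim_{k→∞} β_k(x) exist, lie in [0,1], and satisfy α(x)+β(x)=1. -/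
open MeasureTheory ProbabilityTheory Filter
open scoped ENNReal Classical

noncomputable section

variable {Ω : Type*} [MeasurableSpace Ω]

/-- Real-barrier version of the truncated exit time `τ_k^x`. -/
def ladderTauR (ξ : ℕ → Ω → ℤ) (L U x : ℝ) (k : ℕ) (ω : Ω) : ℕ :=
  if ∃ l ≤ k, (x + (ladderS ξ l ω : ℝ) ≤ L ∨ U ≤ x + (ladderS ξ l ω : ℝ))
  then sInf {l | l ≤ k ∧ (x + (ladderS ξ l ω : ℝ) ≤ L ∨ U ≤ x + (ladderS ξ l ω : ℝ))}
  else k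

/-- Real-barrier version of the lower-exit event `A_k^x`. -/
def ladderAR (ξ : ℕ → Ω → ℤ) (L U x : ℝ) (k : ℕ) : Set Ω :=
  ⋃ l ∈ Finset.range (k + 1),
    {ω | ladderTauR ξ L U x k ω = l ∧ x + (ladderS ξ l ω : ℝ) ≤ L}

/-- Real-barrier version of the upper-exit event `B_k^x`. -/
def ladderBR (ξ : ℕ → Ω → ℤ) (L U x : ℝ) (k : ℕ) : Set Ω :=
  ⋃ l ∈ Finset.range (k + 1),
    {ω | ladderTauR ξ L U x k ω = l ∧ U ≤ x + (ladderS ξ l ω : ℝ)}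

/-! ### Auxiliary definitions and lemmas -/

/-- The exit condition at time `l`. -/
def lcond (ξ : ℕ → Ω → ℤ) (L U x : ℝ) (l : ℕ) (ω : Ω) : Prop :=
  x + (ladderS ξ l ω : ℝ) ≤ L ∨ U ≤ x + (ladderS ξ l ω : ℝ)

/-- First exit at `l`, downward. -/
def lA (ξ : ℕ → Ω → ℤ) (L U x : ℝ) (l : ℕ) : Set Ω :=
  {ω | (∀ j < l, ¬ lcond ξ L U x j ω) ∧ x + (ladderS ξ l ω : ℝ) ≤ L}

/-- First exit at `l`, upward. -/
def lB (ξ : ℕ → Ω → ℤ) (L U x : ℝ) (l : ℕ) : Set Ω :=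
  {ω | (∀ j < l, ¬ lcond ξ L U x j ω) ∧ U ≤ x + (ladderS ξ l ω : ℝ)}

/-- Block event: all `ξ i = 1` on block `j` of length `N`. -/
def lE (ξ : ℕ → Ω → ℤ) (N j : ℕ) : Set Ω :=
  ⋂ i ∈ Finset.Ioc (j * N) (j * N + N), (ξ i) ⁻¹' {1}

lemma ladderX_measurable (ξ : ℕ → Ω → ℤ) (hmeas : ∀ n, Measurable (ξ n)) (k : ℕ) :
    Measurable (ladderX ξ k) := by
  unfold ladderX
  by_cases hk : k = 1
  · simp only [if_pos hk]
    exact Measurable.ite ((hmeas 1) (measurableSet_singleton 1)) measurable_const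
      measurable_const
  · simp only [if_neg hk]
    exact Measurable.ite ((hmeas k) (measurableSet_singleton (-1))) measurable_const
      (Measurable.ite ((hmeas (k - 1)) (measurableSet_singleton 1)) measurable_const
        measurable_const)

lemma ladderS_measurable (ξ : ℕ → Ω → ℤ) (hmeas : ∀ n, Measurable (ξ n)) (n : ℕ) :
    Measurable (ladderS ξ n) :=
  Finset.measurable_sum _ fun k _ => ladderX_measurable ξ hmeas k

lemma ladderSR_measurable (ξ : ℕ → Ω → ℤ) (hmeas : ∀ n, Measurable (ξ n)) (x : ℝ) (n : ℕ) :
    Measurable (fun ω => x + (ladderS ξ n ω : ℝ)) :=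
  measurable_const.add ((measurable_of_countable (fun z : ℤ => (z : ℝ))).comp
    (ladderS_measurable ξ hmeas n))

lemma lcond_measurable (ξ : ℕ → Ω → ℤ) (hmeas : ∀ n, Measurable (ξ n)) (L U x : ℝ) (l : ℕ) :
    MeasurableSet {ω | lcond ξ L U x l ω} := by
  have h := ladderSR_measurable ξ hmeas x l
  exact (measurableSet_le h measurable_const).union (measurableSet_le measurable_const h)

lemma lA_measurable (ξ : ℕ → Ω → ℤ) (hmeas : ∀ n, Measurable (ξ n)) (L U x : ℝ) (l : ℕ) :
    MeasurableSet (lA ξ L U x l) := by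
  have : lA ξ L U x l =
      (⋂ j ∈ Finset.range l, {ω | lcond ξ L U x j ω}ᶜ) ∩
        {ω | x + (ladderS ξ l ω : ℝ) ≤ L} := by
    ext ω
    simp [lA, Set.mem_iInter, and_comm]
  rw [this]
  exact (Finset.measurableSet_biInter _ fun j _ => (lcond_measurable ξ hmeas L U x j).compl).inter
    (measurableSet_le (ladderSR_measurable ξ hmeas x l) measurable_const)

lemma lB_measurable (ξ : ℕ → Ω → ℤ) (hmeas : ∀ n, Measurable (ξ n)) (L U x : ℝ) (l : ℕ) :
    MeasurableSet (lB ξ L U x l) := by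
  have : lB ξ L U x l =
      (⋂ j ∈ Finset.range l, {ω | lcond ξ L U x j ω}ᶜ) ∩
        {ω | U ≤ x + (ladderS ξ l ω : ℝ)} := by
    ext ω
    simp [lB, Set.mem_iInter, and_comm]
  rw [this]
  exact (Finset.measurableSet_biInter _ fun j _ => (lcond_measurable ξ hmeas L U x j).compl).inter
    (measurableSet_le measurable_const (ladderSR_measurable ξ hmeas x l))

lemma ladderAR_eq (ξ : ℕ → Ω → ℤ) (L U x : ℝ) (k : ℕ) :
    ladderAR ξ L U x k = ⋃ l ∈ Finset.range (k + 1), lA ξ L U x l := by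
  ext ω
  simp only [ladderAR, Set.mem_iUnion, Finset.mem_range, Nat.lt_succ_iff, Set.mem_setOf_eq,
    exists_prop, lA, lcond]
  constructor
  · rintro ⟨l, hlk, hτ, hL⟩
    refine ⟨l, hlk, ?_, hL⟩
    have hex : ∃ l' ≤ k, (x + (ladderS ξ l' ω : ℝ) ≤ L ∨ U ≤ x + (ladderS ξ l' ω : ℝ)) :=
      ⟨l, hlk, Or.inl hL⟩
    rw [ladderTauR, if_pos hex] at hτ
    intro j hj hC
    have hmem : j ∈ {l' | l' ≤ k ∧ (x + (ladderS ξ l' ω : ℝ) ≤ L ∨ U ≤ x + (ladderS ξ l' ω : ℝ))} :=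
      ⟨le_trans hj.le hlk, hC⟩
    have := Nat.sInf_le hmem
    omega
  · rintro ⟨l, hlk, hfirst, hL⟩
    have hex : ∃ l' ≤ k, (x + (ladderS ξ l' ω : ℝ) ≤ L ∨ U ≤ x + (ladderS ξ l' ω : ℝ)) :=
      ⟨l, hlk, Or.inl hL⟩
    refine ⟨l, hlk, ?_, hL⟩
    rw [ladderTauR, if_pos hex]
    have h1 : sInf {l' | l' ≤ k ∧
        (x + (ladderS ξ l' ω : ℝ) ≤ L ∨ U ≤ x + (ladderS ξ l' ω : ℝ))} ≤ l :=
      Nat.sInf_le ⟨hlk, Or.inl hL⟩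
    have hne : {l' | l' ≤ k ∧
        (x + (ladderS ξ l' ω : ℝ) ≤ L ∨ U ≤ x + (ladderS ξ l' ω : ℝ))}.Nonempty :=
      ⟨l, hlk, Or.inl hL⟩
    have h2 := Nat.sInf_mem hne
    rcases lt_or_eq_of_le h1 with h | h
    · exact absurd h2.2 (hfirst _ h)
    · exact h

lemma ladderBR_eq (ξ : ℕ → Ω → ℤ) (L U x : ℝ) (k : ℕ) :
    ladderBR ξ L U x k = ⋃ l ∈ Finset.range (k + 1), lB ξ L U x l := by
  ext ω
  simp only [ladderBR, Set.mem_iUnion, Finset.mem_range, Nat.lt_succ_iff, Set.mem_setOf_eq,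
    exists_prop, lB, lcond]
  constructor
  · rintro ⟨l, hlk, hτ, hU⟩
    refine ⟨l, hlk, ?_, hU⟩
    have hex : ∃ l' ≤ k, (x + (ladderS ξ l' ω : ℝ) ≤ L ∨ U ≤ x + (ladderS ξ l' ω : ℝ)) :=
      ⟨l, hlk, Or.inr hU⟩
    rw [ladderTauR, if_pos hex] at hτ
    intro j hj hC
    have hmem : j ∈ {l' | l' ≤ k ∧ (x + (ladderS ξ l' ω : ℝ) ≤ L ∨ U ≤ x + (ladderS ξ l' ω : ℝ))} :=
      ⟨le_trans hj.le hlk, hC⟩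
    have := Nat.sInf_le hmem
    omega
  · rintro ⟨l, hlk, hfirst, hU⟩
    have hex : ∃ l' ≤ k, (x + (ladderS ξ l' ω : ℝ) ≤ L ∨ U ≤ x + (ladderS ξ l' ω : ℝ)) :=
      ⟨l, hlk, Or.inr hU⟩
    refine ⟨l, hlk, ?_, hU⟩
    rw [ladderTauR, if_pos hex]
    have h1 : sInf {l' | l' ≤ k ∧
        (x + (ladderS ξ l' ω : ℝ) ≤ L ∨ U ≤ x + (ladderS ξ l' ω : ℝ))} ≤ l :=
      Nat.sInf_le ⟨hlk, Or.inr hU⟩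
    have hne : {l' | l' ≤ k ∧
        (x + (ladderS ξ l' ω : ℝ) ≤ L ∨ U ≤ x + (ladderS ξ l' ω : ℝ))}.Nonempty :=
      ⟨l, hlk, Or.inr hU⟩
    have h2 := Nat.sInf_mem hne
    rcases lt_or_eq_of_le h1 with h | h
    · exact absurd h2.2 (hfirst _ h)
    · exact h

lemma lE_measurable (ξ : ℕ → Ω → ℤ) (hmeas : ∀ n, Measurable (ξ n)) (N j : ℕ) :
    MeasurableSet (lE ξ N j) :=
  Finset.measurableSet_biInter _ fun i _ => (hmeas i) (measurableSet_singleton 1)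

lemma lE_prob (p : ℝ) (P : Measure Ω) [IsProbabilityMeasure P]
    (ξ : ℕ → Ω → ℤ)
    (hindep : iIndepFun ξ P)
    (hprob : ∀ n, 1 ≤ n → P {ω | ξ n ω = 1} = ENNReal.ofReal p) (N j : ℕ) :
    P (lE ξ N j) = ENNReal.ofReal p ^ N := by
  rw [lE, hindep.meas_biInter (fun i _ => ⟨{1}, measurableSet_singleton 1, rfl⟩)]
  have h : ∀ i ∈ Finset.Ioc (j * N) (j * N + N), P ((ξ i) ⁻¹' {1}) = ENNReal.ofReal p := by
    intro i hi
    have h1 : 1 ≤ i := by have := (Finset.mem_Ioc.1 hi).1; omega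
    have := hprob i h1
    simpa [Set.preimage, Set.mem_singleton_iff] using this
  rw [Finset.prod_congr rfl h, Finset.prod_const, Nat.card_Ioc]
  congr 1
  omega

lemma lG_prob (p : ℝ) (P : Measure Ω) [IsProbabilityMeasure P]
    (ξ : ℕ → Ω → ℤ) (hmeas : ∀ n, Measurable (ξ n))
    (hindep : iIndepFun ξ P)
    (hprob : ∀ n, 1 ≤ n → P {ω | ξ n ω = 1} = ENNReal.ofReal p) (N : ℕ) (m : ℕ) :
    P (⋂ j ∈ Finset.range m, (lE ξ N j)ᶜ) = (1 - ENNReal.ofReal p ^ N) ^ m := by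
  induction m with
  | zero => simp
  | succ m ih =>
    rw [Finset.range_add_one, Finset.set_biInter_insert]
    set S₁ : Finset ℕ := Finset.Ioc 0 (m * N) with hS₁
    set S₂ : Finset ℕ := Finset.Ioc (m * N) (m * N + N) with hS₂
    have hdisj : Disjoint S₂ S₁ := by
      rw [Finset.disjoint_left]
      intro i h2 h1
      rw [hS₂, Finset.mem_Ioc] at h2
      rw [hS₁, Finset.mem_Ioc] at h1
      omega
    have hIndep := hindep.indepFun_finset S₂ S₁ hdisj hmeas
    have hs : MeasurableSet[MeasurableSpace.comap (fun a (i : S₂) => ξ i a) MeasurableSpace.pi]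
        (lE ξ N m)ᶜ := by
      rw [MeasurableSpace.measurableSet_comap]
      refine ⟨{v : S₂ → ℤ | ∀ i, v i = 1}ᶜ, (Set.to_countable _).measurableSet, ?_⟩
      rw [Set.preimage_compl]
      congr 1
      ext ω
      simp only [Set.mem_preimage, Set.mem_setOf_eq, lE, Set.mem_iInter, Set.mem_singleton_iff]
      constructor
      · intro h i hi
        exact h ⟨i, hi⟩
      · intro h i
        exact h i i.2
    have ht : MeasurableSet[MeasurableSpace.comap (fun a (i : S₁) => ξ i a) MeasurableSpace.pi]
        (⋂ j ∈ Finset.range m, (lE ξ N j)ᶜ) := by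
      rw [MeasurableSpace.measurableSet_comap]
      refine ⟨{v : S₁ → ℤ | ∀ j < m, ∃ i : S₁, (i : ℕ) ∈ Finset.Ioc (j * N) (j * N + N) ∧ v i ≠ 1},
        (Set.to_countable _).measurableSet, ?_⟩
      ext ω
      simp only [Set.mem_preimage, Set.mem_setOf_eq, Set.mem_iInter, Finset.mem_range,
        Set.mem_compl_iff, lE, Set.mem_singleton_iff, not_forall]
      constructor
      · intro h j hj
        obtain ⟨i, hi, hne⟩ := h j hj
        exact ⟨i, hi, hne⟩
      · intro h j hj
        obtain ⟨i, hi, hne⟩ := h j hj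
        have hmem : i ∈ S₁ := by
          rw [hS₁, Finset.mem_Ioc]
          rw [Finset.mem_Ioc] at hi
          have hjm : (j + 1) * N ≤ m * N := Nat.mul_le_mul_right N hj
          constructor
          · omega
          · calc i ≤ j * N + N := hi.2
              _ = (j + 1) * N := by ring
              _ ≤ m * N := hjm
        exact ⟨⟨i, hmem⟩, hi, hne⟩
    rw [hIndep.meas_inter hs ht, ih,
      prob_compl_eq_one_sub (lE_measurable ξ hmeas N m),
      lE_prob p P ξ hindep hprob N m, pow_succ, mul_comm]

lemma exit_of_lE (ξ : ℕ → Ω → ℤ) (L U x : ℝ) (N : ℕ) (hNr : U - L ≤ (N : ℝ)) (j : ℕ) (ω : Ω)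
    (hω : ω ∈ lE ξ N j) : ∃ l, lcond ξ L U x l ω := by
  by_contra h
  push_neg at h
  have h1 := h (j * N)
  have h2 := h (j * N + N)
  simp only [lcond, not_or, not_le] at h1 h2
  have hX : ∀ i ∈ Finset.Ioc (j * N) (j * N + N), (1 : ℤ) ≤ ladderX ξ i ω := by
    intro i hi
    have hξ : ξ i ω = 1 := by
      have := Set.mem_iInter₂.1 hω i hi
      simpa using this
    unfold ladderX
    by_cases hi1 : i = 1
    · rw [if_pos hi1, if_pos (hi1 ▸ hξ)]
    · rw [if_neg hi1, if_neg (by rw [hξ]; decide)]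
      split_ifs <;> omega
  have hsum : (N : ℤ) ≤ ∑ i ∈ Finset.Ioc (j * N) (j * N + N), ladderX ξ i ω := by
    have hcard : (Finset.Ioc (j * N) (j * N + N)).card = N := by
      rw [Nat.card_Ioc]; omega
    calc (N : ℤ) = (Finset.Ioc (j * N) (j * N + N)).card • (1 : ℤ) := by
          rw [hcard]; simp
      _ ≤ _ := Finset.card_nsmul_le_sum _ _ _ hX
  have hS : ladderS ξ (j * N + N) ω
      = ladderS ξ (j * N) ω + ∑ i ∈ Finset.Ioc (j * N) (j * N + N), ladderX ξ i ω := by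
    unfold ladderS
    rw [show Finset.Icc 1 (j * N + N) = Finset.Ioc 0 (j * N + N) from Finset.Icc_add_one_left_eq_Ioc 0 _,
      show Finset.Icc 1 (j * N) = Finset.Ioc 0 (j * N) from Finset.Icc_add_one_left_eq_Ioc 0 _,
      ← Finset.sum_Ioc_consecutive _ (Nat.zero_le _) (Nat.le_add_right _ _)]
  have hcast : ((ladderS ξ (j * N) ω : ℤ) : ℝ) + (N : ℝ) ≤ ((ladderS ξ (j * N + N) ω : ℤ) : ℝ) := by
    have : ladderS ξ (j * N) ω + (N : ℤ) ≤ ladderS ξ (j * N + N) ω := by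
      rw [hS]; linarith
    exact_mod_cast this
  linarith [h1.1, h2.2]

/-- For arbitrary real barriers `L < U` and any real start
`x ∈ [L, U]`, the limits `α(x)` and `β(x)` exist, lie in `[0, 1]`, and sum
to `1`. -/
theorem ladder_alpha_add_beta_eq_one_real (p : ℝ) (hp0 : 0 < p) (hp1 : p < 1)
    (P : Measure Ω) [IsProbabilityMeasure P]
    (ξ : ℕ → Ω → ℤ) (hmeas : ∀ n, Measurable (ξ n))
    (hindep : iIndepFun ξ P)
    (hval : ∀ n ω, ξ n ω = 1 ∨ ξ n ω = -1)
    (hprob : ∀ n, 1 ≤ n → P {ω | ξ n ω = 1} = ENNReal.ofReal p)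
    (L U x : ℝ) (hLU : L < U) (hxL : L ≤ x) (hxU : x ≤ U) :
    ∃ a b : ℝ, a ∈ Set.Icc (0 : ℝ) 1 ∧ b ∈ Set.Icc (0 : ℝ) 1 ∧
      Tendsto (fun k => (P (ladderAR ξ L U x k)).toReal) atTop (nhds a) ∧
      Tendsto (fun k => (P (ladderBR ξ L U x k)).toReal) atTop (nhds b) ∧
      a + b = 1 := by
  classical
  set N : ℕ := ⌈U - L⌉₊ + 1 with hN
  have hNr : U - L ≤ (N : ℝ) := by
    have h1 := Nat.le_ceil (U - L)
    have h2 : ((⌈U - L⌉₊ : ℕ) : ℝ) ≤ (N : ℝ) := by exact_mod_cast Nat.le_succ _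
    linarith
  set A : Set Ω := ⋃ l, lA ξ L U x l with hA
  set B : Set Ω := ⋃ l, lB ξ L U x l with hB
  have hmeasA : MeasurableSet A := MeasurableSet.iUnion fun l => lA_measurable ξ hmeas L U x l
  have hmeasB : MeasurableSet B := MeasurableSet.iUnion fun l => lB_measurable ξ hmeas L U x l
  have hmeasD : MeasurableSet {ω | ∃ l, lcond ξ L U x l ω} := by
    have hEq : {ω | ∃ l, lcond ξ L U x l ω} = ⋃ l, {ω | lcond ξ L U x l ω} := by
      ext ω; simp
    rw [hEq]
    exact MeasurableSet.iUnion fun l => lcond_measurable ξ hmeas L U x l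
  have hdisj : Disjoint A B := by
    rw [Set.disjoint_left]
    rintro ω hA' hB'
    simp only [hA, hB, Set.mem_iUnion, lA, lB, Set.mem_setOf_eq, lcond] at hA' hB'
    obtain ⟨l, hfA, hLl⟩ := hA'
    obtain ⟨l', hfB, hUl⟩ := hB'
    rcases lt_trichotomy l l' with hlt | heq | hgt
    · exact hfB l hlt (Or.inl hLl)
    · subst heq; linarith
    · exact hfA l' hgt (Or.inr hUl)
  have hunion : A ∪ B = {ω | ∃ l, lcond ξ L U x l ω} := by
    ext ω
    simp only [hA, hB, Set.mem_union, Set.mem_iUnion, lA, lB, Set.mem_setOf_eq, lcond]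
    constructor
    · rintro (⟨l, _, hl⟩ | ⟨l, _, hl⟩)
      exacts [⟨l, Or.inl hl⟩, ⟨l, Or.inr hl⟩]
    · rintro hex
      have hfind := Nat.find_spec hex
      have hmin : ∀ j < Nat.find hex,
          ¬ (x + (ladderS ξ j ω : ℝ) ≤ L ∨ U ≤ x + (ladderS ξ j ω : ℝ)) :=
        fun j hj => Nat.find_min hex hj
      rcases hfind with hl | hu
      · exact Or.inl ⟨Nat.find hex, hmin, hl⟩
      · exact Or.inr ⟨Nat.find hex, hmin, hu⟩
  have hsub : ∀ m, {ω | ∃ l, lcond ξ L U x l ω}ᶜ ⊆ ⋂ j ∈ Finset.range m, (lE ξ N j)ᶜ := by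
    intro m ω hω
    rw [Set.mem_iInter₂]
    intro j _ hE
    exact hω (exit_of_lE ξ L U x N hNr j ω hE)
  have hr0 : ENNReal.ofReal p ^ N ≠ 0 :=
    pow_ne_zero _ (ENNReal.ofReal_pos.2 hp0).ne'
  have hlt1 : 1 - ENNReal.ofReal p ^ N < 1 :=
    ENNReal.sub_lt_self ENNReal.one_ne_top one_ne_zero hr0
  have htend0 := ENNReal.tendsto_pow_atTop_nhds_zero_of_lt_one hlt1
  have hle : ∀ m, P {ω | ∃ l, lcond ξ L U x l ω}ᶜ ≤ (1 - ENNReal.ofReal p ^ N) ^ m :=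
    fun m => (measure_mono (hsub m)).trans_eq (lG_prob p P ξ hmeas hindep hprob N m)
  have hDc : P {ω | ∃ l, lcond ξ L U x l ω}ᶜ = 0 :=
    le_antisymm (ge_of_tendsto htend0 (Filter.Eventually.of_forall hle)) (zero_le)
  have hD1 : P {ω | ∃ l, lcond ξ L U x l ω} = 1 :=
    (prob_compl_eq_zero_iff₀ hmeasD.nullMeasurableSet).1 hDc
  have hPsum : P A + P B = 1 := by
    rw [← measure_union hdisj hmeasB, hunion, hD1]
  have hmonoA : Monotone (fun k => ladderAR ξ L U x k) := by
    intro k k' hk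
    show ladderAR ξ L U x k ≤ ladderAR ξ L U x k'
    rw [ladderAR_eq, ladderAR_eq]
    refine Set.iUnion₂_subset fun l hl => ?_
    refine Set.subset_iUnion₂ (s := fun l (_ : l ∈ Finset.range (k' + 1)) => lA ξ L U x l) l ?_
    have := Finset.mem_range.1 hl
    exact Finset.mem_range.2 (by omega)
  have hmonoB : Monotone (fun k => ladderBR ξ L U x k) := by
    intro k k' hk
    show ladderBR ξ L U x k ≤ ladderBR ξ L U x k'
    rw [ladderBR_eq, ladderBR_eq]
    refine Set.iUnion₂_subset fun l hl => ?_
    refine Set.subset_iUnion₂ (s := fun l (_ : l ∈ Finset.range (k' + 1)) => lB ξ L U x l) l ?_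
    have := Finset.mem_range.1 hl
    exact Finset.mem_range.2 (by omega)
  have hAU : ⋃ k, ladderAR ξ L U x k = A := by
    ext ω
    simp only [ladderAR_eq, Set.mem_iUnion, Finset.mem_range, exists_prop, hA]
    constructor
    · rintro ⟨k, l, _, h⟩; exact ⟨l, h⟩
    · rintro ⟨l, h⟩; exact ⟨l, l, Nat.lt_succ_self l, h⟩
  have hBU : ⋃ k, ladderBR ξ L U x k = B := by
    ext ω
    simp only [ladderBR_eq, Set.mem_iUnion, Finset.mem_range, exists_prop, hB]
    constructor
    · rintro ⟨k, l, _, h⟩; exact ⟨l, h⟩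
    · rintro ⟨l, h⟩; exact ⟨l, l, Nat.lt_succ_self l, h⟩
  have htendA : Tendsto (fun k => P (ladderAR ξ L U x k)) atTop (nhds (P A)) := by
    have := tendsto_measure_iUnion_atTop (μ := P) hmonoA
    rwa [hAU] at this
  have htendB : Tendsto (fun k => P (ladderBR ξ L U x k)) atTop (nhds (P B)) := by
    have := tendsto_measure_iUnion_atTop (μ := P) hmonoB
    rwa [hBU] at this
  refine ⟨(P A).toReal, (P B).toReal, ⟨ENNReal.toReal_nonneg, ?_⟩, ⟨ENNReal.toReal_nonneg, ?_⟩,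
    (ENNReal.tendsto_toReal (measure_ne_top P A)).comp htendA,
    (ENNReal.tendsto_toReal (measure_ne_top P B)).comp htendB, ?_⟩
  · simpa using ENNReal.toReal_mono ENNReal.one_ne_top (prob_le_one (μ := P) (s := A))
  · simpa using ENNReal.toReal_mono ENNReal.one_ne_top (prob_le_one (μ := P) (s := B))
  · rw [← ENNReal.toReal_add (measure_ne_top P A) (measure_ne_top P B), hPsum, ENNReal.toReal_one]

end
end
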